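/- arXiv:2408.14115 — 9 statements merged into one kernel-verified Lean document; each statement's English description precedes it below -/
import Mathlib

section
/- Power balance for port-Hamiltonian descriptor systems: let (E,A,B,C,D) be a port-Hamiltonian descriptor system with pH decomposition matrices J, R, Q ∈ ℝ^{n×n}, G, P ∈ ℝ^{n×m} and S = (D+D^T)/2, and let H(x) = (1/2)·x^T E^T Q x. If x : ℝ → ℝ^n is differentiable at t, u : ℝ → ℝ^m, y(t) = C x(t) + D u(t), and E x'(t) = A x(t) + B u(t), then the function t ↦ H(x(t)) is differentiable at t with derivative equal to −[x(t); u(t)]^T · [[Q^T R Q, Q^T P],[P^T Q, S]] · [x(t); u(t)] + y(t)^T u(t). -/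
open Matrix
open scoped ComplexOrder

/-- View a real matrix as a complex matrix. -/
noncomputable def toC {k l : Type*} (M : Matrix k l ℝ) : Matrix k l ℂ :=
  M.map (fun x => (x : ℂ))

/-- The matrix pencil `s E - A`, viewed over `ℂ`. -/
noncomputable def pencil {n : ℕ} (E A : Matrix (Fin n) (Fin n) ℝ) (s : ℂ) :
    Matrix (Fin n) (Fin n) ℂ :=
  s • toC E - toC A

/-- The transfer function `T(s) = C (sE - A)⁻¹ B + D` of the descriptor system. -/
noncomputable def transfer {n m : ℕ} (E A : Matrix (Fin n) (Fin n) ℝ)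
    (B : Matrix (Fin n) (Fin m) ℝ) (C : Matrix (Fin m) (Fin n) ℝ)
    (D : Matrix (Fin m) (Fin m) ℝ) (s : ℂ) : Matrix (Fin m) (Fin m) ℂ :=
  toC C * (pencil E A s)⁻¹ * toC B + toC D

/-- A descriptor system is positive real if the pencil is invertible on the open right
half-plane and `T(s) + T(s)ᴴ` is positive semidefinite there. -/
def PositiveReal {n m : ℕ} (E A : Matrix (Fin n) (Fin n) ℝ)
    (B : Matrix (Fin n) (Fin m) ℝ) (C : Matrix (Fin m) (Fin n) ℝ)
    (D : Matrix (Fin m) (Fin m) ℝ) : Prop :=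
  ∀ s : ℂ, 0 < s.re → (pencil E A s).det ≠ 0 ∧
    (transfer E A B C D s + (transfer E A B C D s)ᴴ).PosSemidef

/-- Complete controllability: `[αE - βA, B]` has full row rank for all `(α,β) ≠ (0,0)`. -/
def CompletelyControllable {n m : ℕ} (E A : Matrix (Fin n) (Fin n) ℝ)
    (B : Matrix (Fin n) (Fin m) ℝ) : Prop :=
  ∀ α β : ℂ, ¬(α = 0 ∧ β = 0) →
    (fromCols (α • toC E - β • toC A) (toC B)).rank = n

/-- Complete observability: `[αE - βA; C]` has full column rank for all `(α,β) ≠ (0,0)`. -/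
def CompletelyObservable {n m : ℕ} (E A : Matrix (Fin n) (Fin n) ℝ)
    (C : Matrix (Fin m) (Fin n) ℝ) : Prop :=
  ∀ α β : ℂ, ¬(α = 0 ∧ β = 0) →
    (fromRows (α • toC E - β • toC A) (toC C)).rank = n

/-- A descriptor system `(E,A,B,C,D)` is port-Hamiltonian if it admits a pH decomposition. -/
def IsPortHamiltonian {n m : ℕ} (E A : Matrix (Fin n) (Fin n) ℝ)
    (B : Matrix (Fin n) (Fin m) ℝ) (C : Matrix (Fin m) (Fin n) ℝ)
    (D : Matrix (Fin m) (Fin m) ℝ) : Prop :=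
  ∃ (J R Q : Matrix (Fin n) (Fin n) ℝ) (G P : Matrix (Fin n) (Fin m) ℝ),
    A = (J - R) * Q ∧ B = G - P ∧ C = (G + P)ᵀ * Q ∧ Jᵀ = -J ∧
    (Eᵀ * Q).PosSemidef ∧
    (fromBlocks (Qᵀ * R * Q) (Qᵀ * P) (Pᵀ * Q) ((1/2 : ℝ) • (D + Dᵀ))).PosSemidef

/-- The KYP block matrix `[[AᵀQ + QᵀA, QᵀB - Cᵀ], [BᵀQ - C, -D - Dᵀ]]`. -/
def KYPmatrix {n m : ℕ} (A : Matrix (Fin n) (Fin n) ℝ)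
    (B : Matrix (Fin n) (Fin m) ℝ) (C : Matrix (Fin m) (Fin n) ℝ)
    (D : Matrix (Fin m) (Fin m) ℝ) (Q : Matrix (Fin n) (Fin n) ℝ) :
    Matrix (Fin n ⊕ Fin m) (Fin n ⊕ Fin m) ℝ :=
  fromBlocks (Aᵀ * Q + Qᵀ * A) (Qᵀ * B - Cᵀ) (Bᵀ * Q - C) (-D - Dᵀ)


lemma hasDerivAt_quad_aux {n : ℕ} (M : Matrix (Fin n) (Fin n) ℝ) (hM : Mᵀ = M)
    (x : ℝ → Fin n → ℝ) (xd : Fin n → ℝ) (t : ℝ) (hx : HasDerivAt x xd t) :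
    HasDerivAt (fun τ => (1/2 : ℝ) * (x τ ⬝ᵥ M.mulVec (x τ)))
      (x t ⬝ᵥ M.mulVec xd) t := by
  have hxi : ∀ i, HasDerivAt (fun τ => x τ i) (xd i) t := (hasDerivAt_pi).1 hx
  have h1 : HasDerivAt (fun τ => x τ ⬝ᵥ M.mulVec (x τ))
      (xd ⬝ᵥ M.mulVec (x t) + x t ⬝ᵥ M.mulVec xd) t := by
    have : ∀ τ, x τ ⬝ᵥ M.mulVec (x τ) = ∑ i, x τ i * ∑ j, M i j * x τ j := by
      intro τ; simp [dotProduct, mulVec]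
    simp only [this]
    have key : HasDerivAt (fun τ => ∑ i, x τ i * ∑ j, M i j * x τ j)
        (∑ i, (xd i * ∑ j, M i j * x t j + x t i * ∑ j, M i j * xd j)) t := by
      apply HasDerivAt.fun_sum
      intro i _
      exact (hxi i).mul (HasDerivAt.fun_sum (fun j _ => (hxi j).const_mul (M i j)))
    convert key using 1
    simp [dotProduct, mulVec, Finset.sum_add_distrib]
  have hsym : xd ⬝ᵥ M.mulVec (x t) = x t ⬝ᵥ M.mulVec xd := by
    rw [dotProduct_comm, dotProduct_mulVec, ← mulVec_transpose, hM]
  rw [hsym] at h1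
  have := h1.const_mul (1/2 : ℝ)
  convert this using 1
  case e'_9 => ring
  all_goals rfl

lemma power_balance_alg {n m : ℕ} (J R Q : Matrix (Fin n) (Fin n) ℝ)
    (G P : Matrix (Fin n) (Fin m) ℝ) (D : Matrix (Fin m) (Fin m) ℝ)
    (hJ : Jᵀ = -J) (a : Fin n → ℝ) (b : Fin m → ℝ) :
    Q.mulVec a ⬝ᵥ (((J - R) * Q).mulVec a + (G - P).mulVec b)
    = -(Sum.elim a b ⬝ᵥ
          (fromBlocks (Qᵀ * R * Q) (Qᵀ * P) (Pᵀ * Q)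
            ((1/2 : ℝ) • (D + Dᵀ))).mulVec (Sum.elim a b))
        + (((G + P)ᵀ * Q).mulVec a + D.mulVec b) ⬝ᵥ b := by
  have hskew : Q.mulVec a ⬝ᵥ J.mulVec (Q.mulVec a) = 0 := by
    have h := dotProduct_mulVec (Q.mulVec a) J (Q.mulVec a)
    rw [← mulVec_transpose, hJ, neg_mulVec, neg_dotProduct] at h
    rw [dotProduct_comm] at h ⊢
    linarith
  simp only [fromBlocks_mulVec, sumElim_dotProduct_sumElim, sub_mul, sub_mulVec,
    add_mulVec, mulVec_add, dotProduct_add, dotProduct_sub,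
    ← mulVec_mulVec, Sum.elim_comp_inl, Sum.elim_comp_inr, smul_mulVec, dotProduct_smul,
    transpose_add, transpose_mul,
    add_mul, Matrix.add_mulVec, Matrix.mulVec_smul, add_dotProduct, smul_eq_mul]
  have e1 : ∀ {k : ℕ} (M : Matrix (Fin n) (Fin k) ℝ) (v : Fin k → ℝ),
      a ⬝ᵥ Qᵀ.mulVec (M.mulVec v) = Q.mulVec a ⬝ᵥ M.mulVec v := by
    intro k M v; rw [dotProduct_mulVec, vecMul_transpose]
  have e2 : b ⬝ᵥ Pᵀ.mulVec (Q.mulVec a) = Q.mulVec a ⬝ᵥ P.mulVec b := by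
    rw [dotProduct_mulVec, vecMul_transpose]; exact dotProduct_comm _ _
  have e4 : Gᵀ.mulVec (Q.mulVec a) ⬝ᵥ b = Q.mulVec a ⬝ᵥ G.mulVec b := by
    rw [dotProduct_comm, dotProduct_mulVec, vecMul_transpose]
    exact dotProduct_comm _ _
  have e5 : Pᵀ.mulVec (Q.mulVec a) ⬝ᵥ b = Q.mulVec a ⬝ᵥ P.mulVec b := by
    rw [dotProduct_comm, dotProduct_mulVec, vecMul_transpose]
    exact dotProduct_comm _ _
  have e6 : b ⬝ᵥ Dᵀ.mulVec b = D.mulVec b ⬝ᵥ b := by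
    rw [dotProduct_mulVec, vecMul_transpose]
  have e7 : b ⬝ᵥ D.mulVec b = D.mulVec b ⬝ᵥ b := dotProduct_comm _ _
  rw [e1, e1, e2, e4, e5, e6, e7, hskew]
  ring

/-- Power balance equation for port-Hamiltonian descriptor systems. -/
theorem power_balance_pH {n m : ℕ}
    (E A J R Q : Matrix (Fin n) (Fin n) ℝ)
    (B G P : Matrix (Fin n) (Fin m) ℝ)
    (C : Matrix (Fin m) (Fin n) ℝ) (D : Matrix (Fin m) (Fin m) ℝ)
    (hA : A = (J - R) * Q) (hB : B = G - P) (hC : C = (G + P)ᵀ * Q)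
    (hJ : Jᵀ = -J) (hEQ : (Eᵀ * Q).PosSemidef)
    (hblock : (fromBlocks (Qᵀ * R * Q) (Qᵀ * P) (Pᵀ * Q)
      ((1/2 : ℝ) • (D + Dᵀ))).PosSemidef)
    (x : ℝ → Fin n → ℝ) (u : ℝ → Fin m → ℝ) (y : ℝ → Fin m → ℝ) (t : ℝ)
    (xd : Fin n → ℝ) (hx : HasDerivAt x xd t)
    (hy : y t = C.mulVec (x t) + D.mulVec (u t))
    (hode : E.mulVec xd = A.mulVec (x t) + B.mulVec (u t)) :
    HasDerivAt (fun τ => (1/2 : ℝ) * (x τ ⬝ᵥ (Eᵀ * Q).mulVec (x τ)))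
      (-(Sum.elim (x t) (u t) ⬝ᵥ
          (fromBlocks (Qᵀ * R * Q) (Qᵀ * P) (Pᵀ * Q)
            ((1/2 : ℝ) • (D + Dᵀ))).mulVec (Sum.elim (x t) (u t)))
        + y t ⬝ᵥ u t) t := by
  have hMsym : (Eᵀ * Q)ᵀ = Eᵀ * Q := by
    rw [← conjTranspose_eq_transpose_of_trivial]
    exact hEQ.1
  have key := hasDerivAt_quad_aux (Eᵀ * Q) hMsym x xd t hx
  have hval : x t ⬝ᵥ (Eᵀ * Q).mulVec xd
      = -(Sum.elim (x t) (u t) ⬝ᵥ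
          (fromBlocks (Qᵀ * R * Q) (Qᵀ * P) (Pᵀ * Q)
            ((1/2 : ℝ) • (D + Dᵀ))).mulVec (Sum.elim (x t) (u t)))
        + y t ⬝ᵥ u t := by
    have h2 : Eᵀ * Q = Qᵀ * E := by
      conv_lhs => rw [← hMsym]
      rw [transpose_mul, transpose_transpose]
    rw [h2, ← mulVec_mulVec, dotProduct_mulVec, vecMul_transpose, hode, hA, hB,
      hy, hC]
    exact power_balance_alg J R Q G P D hJ (x t) (u t)
  rw [← hval]
  exact key
end

section
/- Spectrum of a regular port-Hamiltonian pencil lies in the closed left half-plane: let E, J, R, Q ∈ ℝ^{n×n} and A = (J−R)Q, where J^T = −J, Q^T E = E^T Q is positive semidefinite, Q^T R Q is symmetric positive semidefinite, and the pencil (E,A) is regular, i.e. det(αE − βA) ≠ 0 for some (α,β) ∈ ℂ². Then every λ ∈ ℂ with det(λE − A) = 0 satisfies Re(λ) ≤ 0. -/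
open Matrix
open scoped ComplexOrder

section Aux

open Matrix Module

lemma toC_mul {k : ℕ} (M N : Matrix (Fin k) (Fin k) ℝ) :
    toC (M * N) = toC M * toC N := by
  have h : toC (M * N) = (M * N).map (Complex.ofRealHom : ℝ →+* ℂ) := rfl
  rw [h, Matrix.map_mul]; rfl

lemma toC_transpose {k : ℕ} (M : Matrix (Fin k) (Fin k) ℝ) :
    toC (Mᵀ) = (toC M)ᵀ := by
  ext i j; rfl

lemma toC_conjTranspose {k : ℕ} (M : Matrix (Fin k) (Fin k) ℝ) :
    (toC M)ᴴ = toC (Mᵀ) := by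
  ext i j
  simp [toC, Matrix.conjTranspose_apply, Matrix.map_apply, Complex.conj_ofReal]

lemma posSemidef_toC {k : ℕ} {M : Matrix (Fin k) (Fin k) ℝ} (h : M.PosSemidef) :
    (toC M).PosSemidef := by
  obtain ⟨B, hB⟩ : ∃ B : Matrix (Fin k) (Fin k) ℝ, M = Bᴴ * B := by
    open MatrixOrder in
    obtain ⟨B, hB⟩ := CStarAlgebra.nonneg_iff_eq_star_mul_self.mp h.nonneg
    exact ⟨B, hB⟩
  have hBH : (Bᴴ : Matrix (Fin k) (Fin k) ℝ) = Bᵀ := by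
    ext i j; simp [Matrix.conjTranspose_apply]
  have h2 : toC M = (toC B)ᴴ * toC B := by
    rw [hB, hBH, toC_mul, toC_conjTranspose]
  rw [h2]
  exact Matrix.posSemidef_conjTranspose_mul_self _

lemma toC_sub {k : ℕ} (M N : Matrix (Fin k) (Fin k) ℝ) :
    toC (M - N) = toC M - toC N := by
  ext i j; simp [toC, Matrix.map_apply]

lemma toC_neg {k : ℕ} (M : Matrix (Fin k) (Fin k) ℝ) :
    toC (-M) = -toC M := by
  ext i j; simp [toC, Matrix.map_apply]

lemma star_dot {k : ℕ} (N : Matrix (Fin k) (Fin k) ℂ) (x : Fin k → ℂ) :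
    star (star x ⬝ᵥ (N *ᵥ x)) = star x ⬝ᵥ (Nᴴ *ᵥ x) := by
  rw [← Matrix.star_dotProduct, Matrix.star_mulVec, ← Matrix.dotProduct_mulVec]

end Aux
/-- Finite eigenvalues of a regular pH pencil lie in the
closed left half-plane. -/
theorem pH_spectrum_in_closed_left_halfplane {n : ℕ}
    (E J R Q : Matrix (Fin n) (Fin n) ℝ)
    (hJ : Jᵀ = -J) (hEQ : (Eᵀ * Q).PosSemidef) (hR : (Qᵀ * R * Q).PosSemidef)
    (hreg : ∃ α β : ℂ, (α • toC E - β • toC ((J - R) * Q)).det ≠ 0) :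
    ∀ lam : ℂ, (lam • toC E - toC ((J - R) * Q)).det = 0 → lam.re ≤ 0 := by
  classical
  intro lam hdet
  by_contra hre
  push_neg at hre
  set A : Matrix (Fin n) (Fin n) ℝ := (J - R) * Q with hA
  set Q' : Matrix (Fin n) (Fin n) ℂ := toC Q with hQ'
  -- eigenvector
  obtain ⟨x, hx0, hx⟩ := (Matrix.exists_mulVec_eq_zero_iff).mpr hdet
  have hAx : toC A *ᵥ x = lam • (toC E *ᵥ x) := by
    have h := hx
    rw [Matrix.sub_mulVec, Matrix.smul_mulVec, sub_eq_zero] at h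
    exact h.symm
  -- symmetry of QᵀE
  have hsym : Qᵀ * E = Eᵀ * Q := by
    have h := hEQ.isHermitian
    rw [Matrix.IsHermitian, Matrix.conjTranspose_eq_transpose_of_trivial,
      Matrix.transpose_mul, Matrix.transpose_transpose] at h
    exact h
  -- skew-symmetry of QᵀJQ
  have hskew : (Qᵀ * J * Q)ᵀ = -(Qᵀ * J * Q) := by
    rw [Matrix.transpose_mul, Matrix.transpose_mul, Matrix.transpose_transpose, hJ]
    noncomm_ring
  -- decomposition of Qᵀ * A
  have hQAm : Qᵀ * A = Qᵀ * J * Q - Qᵀ * R * Q := by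
    rw [hA]; noncomm_ring
  -- key identity over ℂ: Q'ᵀ * toC E = toC Eᵀ * Q'
  have hQtE : Q'ᵀ * toC E = toC Eᵀ * Q' := by
    rw [hQ', ← toC_transpose, ← toC_mul, ← toC_mul, hsym]
  -- the key vector identity
  have hvec : lam • (toC (Eᵀ * Q) *ᵥ x)
      = toC (Qᵀ * J * Q) *ᵥ x - toC (Qᵀ * R * Q) *ᵥ x := by
    have h1 : toC Qᵀ *ᵥ ((lam • toC E - toC A) *ᵥ x) = 0 := by
      rw [hx, Matrix.mulVec_zero]
    rw [Matrix.sub_mulVec, Matrix.smul_mulVec, Matrix.mulVec_sub,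
      Matrix.mulVec_smul, Matrix.mulVec_mulVec, Matrix.mulVec_mulVec,
      ← toC_mul, ← toC_mul, hsym, hQAm, sub_eq_zero] at h1
    rw [h1, toC_sub, Matrix.sub_mulVec]
  set H : Matrix (Fin n) (Fin n) ℂ := toC (Eᵀ * Q) with hH
  have hHps : H.PosSemidef := posSemidef_toC hEQ
  have hRps : (toC (Qᵀ * R * Q)).PosSemidef := posSemidef_toC hR
  set c : ℂ := star x ⬝ᵥ (H *ᵥ x) with hcdef
  set r : ℂ := star x ⬝ᵥ (toC (Qᵀ * R * Q) *ᵥ x) with hrdef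
  set j : ℂ := star x ⬝ᵥ (toC (Qᵀ * J * Q) *ᵥ x) with hjdef
  have hc0 : (0:ℂ) ≤ c := hHps.dotProduct_mulVec_nonneg x
  have hr0 : (0:ℂ) ≤ r := hRps.dotProduct_mulVec_nonneg x
  -- scalar identity
  have hscal : lam * c = j - r := by
    have h2 := congrArg (fun v => star x ⬝ᵥ v) hvec
    simpa [dotProduct_sub, dotProduct_smul, smul_eq_mul] using h2
  -- j is purely imaginary
  have hjim : j.re = 0 := by
    have h3 : star j = -j := by
      rw [hjdef, star_dot, toC_conjTranspose, hskew, toC_neg,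
        Matrix.neg_mulVec, dotProduct_neg]
    have h4 := congrArg Complex.re h3
    simp only [Complex.star_def, Complex.conj_re, Complex.neg_re] at h4
    linarith
  -- real parts
  have hcim : c.im = 0 := ((Complex.le_def.mp hc0).2).symm
  have hrim : r.im = 0 := ((Complex.le_def.mp hr0).2).symm
  have hcre : 0 ≤ c.re := by simpa using (Complex.le_def.mp hc0).1
  have hrre : 0 ≤ r.re := by simpa using (Complex.le_def.mp hr0).1
  have h5 := congrArg Complex.re hscal
  simp only [Complex.mul_re, Complex.sub_re, hcim, hjim, mul_zero, sub_zero,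
    zero_sub] at h5
  -- lam.re * c.re = -r.re, all signs force c.re = 0
  have hcre0 : c.re = 0 := by nlinarith
  have hc00 : c = 0 := Complex.ext hcre0 hcim
  have hHx : H *ᵥ x = 0 := (hHps.dotProduct_mulVec_zero_iff x).mp (by
    rw [← hcdef, hc00])
  -- consequences
  have hQEx : Q'ᵀ *ᵥ (toC E *ᵥ x) = 0 := by
    rw [Matrix.mulVec_mulVec, hQtE, hQ', ← toC_mul]
    exact hHx
  have hQAx : Q'ᵀ *ᵥ (toC A *ᵥ x) = 0 := by
    rw [hAx, Matrix.mulVec_smul, hQEx, smul_zero]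
  -- regularity gives the contradiction
  obtain ⟨α, β, hαβ⟩ := hreg
  set M : Matrix (Fin n) (Fin n) ℂ := α • toC E - β • toC A with hM
  have hlam : lam ≠ 0 := by
    intro h; rw [h] at hre; simp at hre
  by_cases hker : Q' *ᵥ x = 0
  · -- x is in the kernel of Q: common kernel vector
    have hAx0 : toC A *ᵥ x = 0 := by
      rw [hA, toC_mul, ← Matrix.mulVec_mulVec, ← hQ', hker, Matrix.mulVec_zero]
    have hEx0 : toC E *ᵥ x = 0 := by
      have h6 := hAx.symm.trans hAx0
      rcases smul_eq_zero.mp h6 with h | h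
      · exact absurd h hlam
      · exact h
    apply hαβ
    refine Matrix.exists_mulVec_eq_zero_iff.mp ⟨x, hx0, ?_⟩
    rw [Matrix.sub_mulVec, Matrix.smul_mulVec, Matrix.smul_mulVec,
      hEx0, hAx0, smul_zero, smul_zero, sub_zero]
  · -- dimension count: M maps Kq ⊔ span{x} into ker Q'ᵀ
    set Kq := LinearMap.ker (Matrix.mulVecLin Q') with hKq
    set Kqt := LinearMap.ker (Matrix.mulVecLin Q'ᵀ) with hKqt
    have hrk : Module.finrank ℂ Kq = Module.finrank ℂ Kqt := by
      have h1 := LinearMap.finrank_range_add_finrank_ker (Matrix.mulVecLin Q')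
      have h2 := LinearMap.finrank_range_add_finrank_ker (Matrix.mulVecLin Q'ᵀ)
      have h3 : Module.finrank ℂ (LinearMap.range (Matrix.mulVecLin Q'ᵀ))
          = Module.finrank ℂ (LinearMap.range (Matrix.mulVecLin Q')) :=
        Matrix.rank_transpose Q'
      rw [Module.finrank_fin_fun] at h1 h2
      rw [h3] at h2
      rw [← hKq] at h1
      rw [← hKqt] at h2
      omega
    set S := Kq ⊔ (Submodule.span ℂ {x}) with hS
    have hxS : x ∈ S := Submodule.mem_sup_right (Submodule.mem_span_singleton_self x)
    have hxK : x ∉ Kq := by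
      rw [hKq, LinearMap.mem_ker, Matrix.mulVecLin_apply]; exact hker
    have hlt : Kq < S := lt_of_le_of_ne le_sup_left (by
      intro h; exact hxK (by rw [h]; exact hxS))
    have hdim : Module.finrank ℂ Kqt < Module.finrank ℂ S := by
      rw [← hrk]; exact Submodule.finrank_lt_finrank_of_lt hlt
    have hsub : S ≤ LinearMap.ker (Matrix.mulVecLin (Q'ᵀ * M)) := by
      rw [hS]
      apply sup_le
      · intro w hw
        rw [hKq, LinearMap.mem_ker, Matrix.mulVecLin_apply] at hw
        rw [LinearMap.mem_ker, Matrix.mulVecLin_apply, ← Matrix.mulVec_mulVec]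
        have hAw : toC A *ᵥ w = 0 := by
          rw [hA, toC_mul, ← Matrix.mulVec_mulVec, ← hQ', hw, Matrix.mulVec_zero]
        have hEw : Q'ᵀ *ᵥ (toC E *ᵥ w) = 0 := by
          rw [Matrix.mulVec_mulVec, hQtE, ← Matrix.mulVec_mulVec, hw,
            Matrix.mulVec_zero]
        rw [hM, Matrix.sub_mulVec, Matrix.smul_mulVec, Matrix.smul_mulVec,
          hAw, smul_zero, sub_zero, Matrix.mulVec_smul, hEw, smul_zero]
      · rw [Submodule.span_le, Set.singleton_subset_iff]
        rw [SetLike.mem_coe, LinearMap.mem_ker, Matrix.mulVecLin_apply,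
          ← Matrix.mulVec_mulVec, hM, Matrix.sub_mulVec, Matrix.smul_mulVec,
          Matrix.smul_mulVec, Matrix.mulVec_sub, Matrix.mulVec_smul,
          Matrix.mulVec_smul, hQEx, hQAx, smul_zero, smul_zero, sub_zero]
    let f : S →ₗ[ℂ] Kqt :=
      LinearMap.codRestrict Kqt ((Matrix.mulVecLin M).comp S.subtype) (fun s => by
        have h7 := hsub s.2
        rw [LinearMap.mem_ker, Matrix.mulVecLin_apply] at h7
        rw [hKqt, LinearMap.mem_ker]
        simp only [LinearMap.comp_apply, Matrix.mulVecLin_apply, Submodule.coe_subtype]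
        rw [Matrix.mulVec_mulVec]
        exact h7)
    have hninj : ¬ Function.Injective f := fun hinj =>
      absurd (LinearMap.finrank_le_finrank_of_injective hinj) (not_le.mpr hdim)
    obtain ⟨a, b, hab, hne⟩ := Function.not_injective_iff.mp hninj
    have hval : M *ᵥ (a : Fin n → ℂ) = M *ᵥ (b : Fin n → ℂ) := by
      have h8 := congrArg Subtype.val hab
      simpa [f, LinearMap.codRestrict, Matrix.mulVecLin_apply] using h8
    have hab0 : (a : Fin n → ℂ) - (b : Fin n → ℂ) ≠ 0 :=
      sub_ne_zero_of_ne (fun h => hne (Subtype.coe_injective h))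
    apply hαβ
    refine Matrix.exists_mulVec_eq_zero_iff.mp ⟨_, hab0, ?_⟩
    rw [Matrix.mulVec_sub, hval, sub_self]
end

section
/- Index of a regular port-Hamiltonian pencil is at most two: let E, J, R, Q ∈ ℝ^{n×n} and A = (J−R)Q, where J^T = −J, Q^T E = E^T Q is positive semidefinite, Q^T R Q is symmetric positive semidefinite, and the pencil (E,A) is regular. Then there exist nonnegative integers r, q with r + q = n, invertible real matrices X, Y ∈ ℝ^{n×n}, a matrix A₁ ∈ ℝ^{r×r}, and a matrix N ∈ ℝ^{q×q} with N² = 0 such that XEY = [[I_r, 0],[0, N]] and XAY = [[A₁, 0],[0, I_q]] (block diagonal). -/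
open Matrix
open scoped ComplexOrder

/-! ### Auxiliary lemmas for `pH_index_at_most_two` -/

set_option maxRecDepth 8000

open Polynomial in
/-- From regularity over `ℂ` one can find a nonzero real point where the pencil is invertible. -/
lemma aux_exists_lambda {n : ℕ} (E A : Matrix (Fin n) (Fin n) ℝ)
    (hreg : ∃ α β : ℂ, (α • toC E - β • toC A).det ≠ 0) :
    ∃ l : ℝ, l ≠ 0 ∧ IsUnit (l • E - A).det := by
  have transfer : ∀ l : ℝ, ((l : ℂ) • toC E - toC A).det ≠ 0 → IsUnit (l • E - A).det := by
    intro l h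
    rw [isUnit_iff_ne_zero]
    intro h0
    apply h
    have : ((l • E - A).map (algebraMap ℝ ℂ)) = (l : ℂ) • toC E - toC A := by
      ext i j
      simp [toC, Matrix.map_apply]
    rw [← this]
    have h2 := RingHom.map_det (algebraMap ℝ ℂ) (l • E - A)
    rw [RingHom.mapMatrix_apply] at h2
    rw [← h2, h0, map_zero]
  have pick : ∀ (t : Finset ℂ), ∃ l : ℝ, l ≠ 0 ∧ (l : ℂ) ∉ t := by
    intro t
    obtain ⟨z, hz, hzt⟩ := (Set.infinite_range_of_injective
      Complex.ofReal_injective).exists_notMem_finset (t ∪ {0})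
    obtain ⟨l, rfl⟩ := hz
    refine ⟨l, ?_, fun h => hzt (Finset.mem_union_left _ h)⟩
    intro h0
    exact hzt (by simp [h0])
  have evdet : ∀ (M N : Matrix (Fin n) (Fin n) ℂ) (z : ℂ),
      (((X : ℂ[X]) • M.map C - N.map C).det).eval z = (z • M - N).det := by
    intro M N z
    have := RingHom.map_det (evalRingHom z) ((X : ℂ[X]) • M.map C - N.map C)
    rw [RingHom.mapMatrix_apply] at this
    simp only [coe_evalRingHom] at this
    rw [this]
    congr 1
    ext i j
    simp [Matrix.map_apply]
    ring
  by_cases hcase : ∃ z : ℂ, (z • toC E - toC A).det ≠ 0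
  · obtain ⟨z₀, hz₀⟩ := hcase
    set p : Polynomial ℂ := ((X : ℂ[X]) • (toC E).map C - (toC A).map C).det with hp
    have hpne : p ≠ 0 := by
      intro h
      rw [← evdet (toC E) (toC A) z₀] at hz₀
      rw [← hp] at hz₀
      simp [h] at hz₀
    obtain ⟨l, hl0, hlr⟩ := pick p.roots.toFinset
    refine ⟨l, hl0, transfer l ?_⟩
    rw [← evdet, ← hp]
    intro hev
    exact hlr (Multiset.mem_toFinset.mpr ((Polynomial.mem_roots hpne).mpr hev))
  · push_neg at hcase
    obtain ⟨α, β, hαβ⟩ := hreg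
    have hβ : β = 0 := by
      by_contra hβ
      apply hαβ
      have : α • toC E - β • toC A = β • ((α / β) • toC E - toC A) := by
        rw [smul_sub, smul_smul, mul_div_cancel₀ _ hβ]
      rw [this, Matrix.det_smul]
      rw [hcase (α / β)]
      simp
    rw [hβ, zero_smul, sub_zero, Matrix.det_smul] at hαβ
    have hdetE : (toC E).det ≠ 0 := fun h => hαβ (by simp [h])
    set p : Polynomial ℂ := ((toC E).map C - (X : ℂ[X]) • (toC A).map C).det with hp
    have hev2 : ∀ z : ℂ, p.eval z = (toC E - z • toC A).det := by
      intro z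
      have := RingHom.map_det (evalRingHom z) ((toC E).map C - (X : ℂ[X]) • (toC A).map C)
      rw [RingHom.mapMatrix_apply] at this
      simp only [coe_evalRingHom] at this
      rw [hp, this]
      congr 1
      ext i j
      simp [Matrix.map_apply]
      ring
    have hpne : p ≠ 0 := by
      intro h
      have := hev2 0
      rw [h] at this
      simp at this
      exact hdetE (by simpa using this.symm)
    obtain ⟨μ, hμ0, hμr⟩ := pick p.roots.toFinset
    have hμev : p.eval (μ : ℂ) ≠ 0 :=
      fun hev => hμr (Multiset.mem_toFinset.mpr ((Polynomial.mem_roots hpne).mpr hev))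
    rw [hev2] at hμev
    refine ⟨1 / μ, by simpa using hμ0, transfer _ ?_⟩
    have : toC E - (μ : ℂ) • toC A = (μ : ℂ) • (((1 / μ : ℝ) : ℂ) • toC E - toC A) := by
      rw [smul_sub, smul_smul]
      have : (μ : ℂ) * ((1 / μ : ℝ) : ℂ) = 1 := by
        push_cast
        rw [mul_one_div, div_self (by exact_mod_cast hμ0)]
      rw [this, one_smul]
    rw [this, Matrix.det_smul] at hμev
    intro h
    rw [h] at hμev
    simp at hμev

lemma aux_QtE {n : ℕ} (E Q : Matrix (Fin n) (Fin n) ℝ)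
    (hEQ : (Eᵀ * Q).PosSemidef) : Qᵀ * E = Eᵀ * Q := by
  have h := hEQ.1
  rw [Matrix.IsHermitian, conjTranspose_eq_transpose_of_trivial, transpose_mul,
    transpose_transpose] at h
  exact h

lemma aux_dp {n : ℕ} (M : Matrix (Fin n) (Fin n) ℝ) (y z : Fin n → ℝ) :
    y ⬝ᵥ (M *ᵥ z) = (Mᵀ *ᵥ y) ⬝ᵥ z := by
  rw [Matrix.dotProduct_mulVec, Matrix.mulVec_transpose]

lemma aux_dp2 {n : ℕ} (M : Matrix (Fin n) (Fin n) ℝ) (y z : Fin n → ℝ) :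
    (M *ᵥ y) ⬝ᵥ z = y ⬝ᵥ (Mᵀ *ᵥ z) := by
  rw [aux_dp Mᵀ y z, transpose_transpose]

lemma aux_psd_zero {n : ℕ} {M : Matrix (Fin n) (Fin n) ℝ} (hM : M.PosSemidef)
    {y : Fin n → ℝ} (h : y ⬝ᵥ (M *ᵥ y) = 0) : M *ᵥ y = 0 :=
  (hM.dotProduct_mulVec_zero_iff y).mp (by simpa using h)

/-- Every vector of `ker Qᵀ` is the `E`-image of a vector of `ker Q`
(provided `ker Q ∩ ker E = 0` and `EᵀQ ⪰ 0`). -/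
lemma aux_exists_k {n : ℕ} (E Q : Matrix (Fin n) (Fin n) ℝ)
    (hEQ : (Eᵀ * Q).PosSemidef)
    (hker : ∀ z : Fin n → ℝ, Q *ᵥ z = 0 → E *ᵥ z = 0 → z = 0)
    (v : Fin n → ℝ) (hv : Qᵀ *ᵥ (E *ᵥ v) = 0) :
    ∃ k, Q *ᵥ k = 0 ∧ E *ᵥ k = E *ᵥ v := by
  classical
  set KQ := LinearMap.ker Q.mulVecLin with hKQ
  set KQt := LinearMap.ker Qᵀ.mulVecLin with hKQt
  set φ : KQ →ₗ[ℝ] (Fin n → ℝ) := E.mulVecLin ∘ₗ KQ.subtype with hφ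
  have hφinj : Function.Injective φ := by
    rw [← LinearMap.ker_eq_bot, Submodule.eq_bot_iff]
    rintro ⟨z, hz⟩ h
    have hz' : Q *ᵥ z = 0 := hz
    have hEz : E *ᵥ z = 0 := h
    exact Subtype.ext (hker z hz' hEz)
  have hle : LinearMap.range φ ≤ KQt := by
    rintro _ ⟨⟨z, hz⟩, rfl⟩
    have hz' : Q *ᵥ z = 0 := hz
    show Qᵀ *ᵥ (E *ᵥ z) = 0
    rw [mulVec_mulVec, aux_QtE E Q hEQ, ← mulVec_mulVec, hz', mulVec_zero]
  have hrn1 := LinearMap.finrank_range_add_finrank_ker Q.mulVecLin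
  have hrn2 := LinearMap.finrank_range_add_finrank_ker Qᵀ.mulVecLin
  have hrk : Qᵀ.rank = Q.rank := Matrix.rank_transpose Q
  rw [Matrix.rank] at hrk
  rw [Matrix.rank] at hrk
  have hdim : Module.finrank ℝ KQt = Module.finrank ℝ KQ := by
    have h := hrn2.trans hrn1.symm
    rw [hrk] at h
    exact Nat.add_left_cancel h
  have hfr : Module.finrank ℝ (LinearMap.range φ) = Module.finrank ℝ KQ :=
    LinearMap.finrank_range_of_inj hφinj
  have heq : LinearMap.range φ = KQt :=
    Submodule.eq_of_le_of_finrank_le hle (by rw [hfr, hdim])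
  have hmem : E *ᵥ v ∈ KQt := hv
  rw [← heq] at hmem
  obtain ⟨⟨z, hz⟩, hzeq⟩ := hmem
  exact ⟨z, hz, hzeq⟩

/-- The key structural property of a port-Hamiltonian pencil: writing
`S = λE - (J-R)Q` (invertible) and `Ê = S⁻¹E`, every vector in
`ker Ê ∩ im Ê²` vanishes; stated in the form `Ê³x = 0 → Ê²x = 0`. -/
lemma aux_core {n : ℕ} (E J R Q : Matrix (Fin n) (Fin n) ℝ)
    (hJ : Jᵀ = -J) (hEQ : (Eᵀ * Q).PosSemidef) (hR : (Qᵀ * R * Q).PosSemidef)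
    {l : ℝ} (hl : l ≠ 0) (hS : IsUnit (l • E - (J - R) * Q).det)
    (x : Fin n → ℝ)
    (h0 : ((l • E - (J - R) * Q)⁻¹ * E) *ᵥ (((l • E - (J - R) * Q)⁻¹ * E) *ᵥ
      (((l • E - (J - R) * Q)⁻¹ * E) *ᵥ x)) = 0) :
    ((l • E - (J - R) * Q)⁻¹ * E) *ᵥ (((l • E - (J - R) * Q)⁻¹ * E) *ᵥ x) = 0 := by
  set S : Matrix (Fin n) (Fin n) ℝ := l • E - (J - R) * Q with hSdef
  set Eh : Matrix (Fin n) (Fin n) ℝ := S⁻¹ * E with hEhdef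
  set v : Fin n → ℝ := Eh *ᵥ x with hvdef
  set w : Fin n → ℝ := Eh *ᵥ v with hwdef
  show w = 0
  have hSE : S * Eh = E := by
    rw [hEhdef, ← Matrix.mul_assoc, Matrix.mul_nonsing_inv _ hS, Matrix.one_mul]
  have hSmul : ∀ y : Fin n → ℝ, S *ᵥ (Eh *ᵥ y) = E *ᵥ y := by
    intro y; rw [mulVec_mulVec, hSE]
  have hSinj : ∀ y : Fin n → ℝ, S *ᵥ y = 0 → y = 0 := by
    intro y hy
    have : S⁻¹ *ᵥ (S *ᵥ y) = y := by
      rw [mulVec_mulVec, Matrix.nonsing_inv_mul _ hS, one_mulVec]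
    rw [← this, hy, mulVec_zero]
  have hEw : E *ᵥ w = 0 := by rw [← hSmul w, h0, mulVec_zero]
  have hSw : S *ᵥ w = E *ᵥ v := hSmul v
  have hSv : S *ᵥ v = E *ᵥ x := hSmul x
  have hexp : ∀ y : Fin n → ℝ, S *ᵥ y = l • (E *ᵥ y) - (J - R) *ᵥ (Q *ᵥ y) := by
    intro y
    rw [hSdef, Matrix.sub_mulVec, Matrix.smul_mulVec, mulVec_mulVec]
  have hEv : E *ᵥ v = - ((J - R) *ᵥ (Q *ᵥ w)) := by
    rw [← hSw, hexp w, hEw, smul_zero, zero_sub]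
  have hH := aux_QtE E Q hEQ
  have hRsym : (Qᵀ * R * Q)ᵀ = Qᵀ * R * Q := by
    have h := hR.1
    rwa [Matrix.IsHermitian, conjTranspose_eq_transpose_of_trivial] at h
  have hskew : ∀ y z : Fin n → ℝ, y ⬝ᵥ (J *ᵥ z) = - (z ⬝ᵥ (J *ᵥ y)) := by
    intro y z
    rw [aux_dp J y z, hJ, Matrix.neg_mulVec, neg_dotProduct, dotProduct_comm]
  have hJyy : ∀ y : Fin n → ℝ, y ⬝ᵥ (J *ᵥ y) = 0 := by
    intro y
    have := hskew y y
    linarith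
  have hKform : ∀ y z : Fin n → ℝ,
      y ⬝ᵥ ((Qᵀ * R * Q) *ᵥ z) = (Q *ᵥ y) ⬝ᵥ (R *ᵥ (Q *ᵥ z)) := by
    intro y z
    rw [Matrix.mul_assoc, ← mulVec_mulVec, aux_dp Qᵀ, transpose_transpose, mulVec_mulVec]
  have hHform : ∀ y z : Fin n → ℝ,
      y ⬝ᵥ ((Eᵀ * Q) *ᵥ z) = (E *ᵥ y) ⬝ᵥ (Q *ᵥ z) := by
    intro y z
    rw [← mulVec_mulVec, aux_dp Eᵀ, transpose_transpose]
  have hwH : ∀ y : Fin n → ℝ, (Q *ᵥ w) ⬝ᵥ (E *ᵥ y) = 0 := by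
    intro y
    rw [aux_dp2 Q w (E *ᵥ y), mulVec_mulVec, hH, ← mulVec_mulVec,
      aux_dp Eᵀ w (Q *ᵥ y), transpose_transpose, hEw, zero_dotProduct]
  have h1 : (Q *ᵥ w) ⬝ᵥ (E *ᵥ v) = 0 := hwH v
  have h2 : (Q *ᵥ w) ⬝ᵥ (E *ᵥ v)
      = - ((Q *ᵥ w) ⬝ᵥ (J *ᵥ (Q *ᵥ w))) + (Q *ᵥ w) ⬝ᵥ (R *ᵥ (Q *ᵥ w)) := by
    rw [hEv, dotProduct_neg, Matrix.sub_mulVec, dotProduct_sub]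
    ring
  have hKw : (Qᵀ * R * Q) *ᵥ w = 0 := by
    apply aux_psd_zero hR
    rw [hKform w w]
    have h3 := hJyy (Q *ᵥ w)
    linarith
  have h4 : (Q *ᵥ w) ⬝ᵥ (E *ᵥ x) = 0 := hwH x
  have h5 : (Q *ᵥ w) ⬝ᵥ (E *ᵥ x)
      = l * ((Q *ᵥ w) ⬝ᵥ (E *ᵥ v)) - (Q *ᵥ w) ⬝ᵥ (J *ᵥ (Q *ᵥ v))
        + (Q *ᵥ w) ⬝ᵥ (R *ᵥ (Q *ᵥ v)) := by
    rw [← hSv, hexp v, dotProduct_sub, dotProduct_smul, Matrix.sub_mulVec, dotProduct_sub]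
    simp only [smul_eq_mul]
    ring
  have h6 : (Q *ᵥ w) ⬝ᵥ (R *ᵥ (Q *ᵥ v)) = 0 := by
    rw [← hKform w v, aux_dp, hRsym, hKw, zero_dotProduct]
  have h7 : (Q *ᵥ w) ⬝ᵥ (J *ᵥ (Q *ᵥ v)) = 0 := by
    rw [h4, h1, h6, mul_zero] at h5
    linarith
  have h8 : (Eᵀ * Q) *ᵥ v = 0 := by
    apply aux_psd_zero hEQ
    rw [hHform v v, hEv, neg_dotProduct, Matrix.sub_mulVec, sub_dotProduct]
    have e1 : (J *ᵥ (Q *ᵥ w)) ⬝ᵥ (Q *ᵥ v) = 0 := by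
      rw [dotProduct_comm]
      have := hskew (Q *ᵥ v) (Q *ᵥ w)
      linarith
    have e2 : (R *ᵥ (Q *ᵥ w)) ⬝ᵥ (Q *ᵥ v) = 0 := by
      rw [dotProduct_comm, ← hKform v w, hKw, dotProduct_zero]
    rw [e1, e2]
    ring
  have h9 : Qᵀ *ᵥ (E *ᵥ v) = 0 := by
    rw [mulVec_mulVec, hH, h8]
  have hker : ∀ z : Fin n → ℝ, Q *ᵥ z = 0 → E *ᵥ z = 0 → z = 0 := by
    intro z hz1 hz2
    apply hSinj
    rw [hexp z, hz1, hz2, smul_zero, mulVec_zero, sub_zero]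
  obtain ⟨k, hk1, hk2⟩ := aux_exists_k E Q hEQ hker v h9
  have h10 : S *ᵥ (l⁻¹ • k) = E *ᵥ k := by
    rw [Matrix.mulVec_smul, hexp k, hk1, mulVec_zero, sub_zero, smul_smul,
      inv_mul_cancel₀ hl, one_smul]
  have h11 : w = l⁻¹ • k := by
    have hd : S *ᵥ (w - l⁻¹ • k) = 0 := by
      rw [Matrix.mulVec_sub, h10, hSw, hk2, sub_self]
    have := hSinj _ hd
    rwa [sub_eq_zero] at this
  have h12 : Q *ᵥ w = 0 := by
    rw [h11, Matrix.mulVec_smul, hk1, smul_zero]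
  apply hSinj
  rw [hexp w, hEw, h12, mulVec_zero, smul_zero, sub_zero]

/-- Fitting-type decomposition for a matrix whose third and second kernel powers agree in the
strong form `ker M ∩ im M² = 0`. -/
lemma aux_decomp {n : ℕ} (M : Matrix (Fin n) (Fin n) ℝ)
    (hcore : ∀ x : Fin n → ℝ, M *ᵥ (M *ᵥ (M *ᵥ x)) = 0 → M *ᵥ (M *ᵥ x) = 0) :
    ∃ (r q : ℕ) (hrq : r + q = n) (P : Matrix (Fin n) (Fin n) ℝ)
      (E₁ : Matrix (Fin r) (Fin r) ℝ) (N₀ : Matrix (Fin q) (Fin q) ℝ),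
      IsUnit P ∧ IsUnit E₁.det ∧ N₀ * N₀ = 0 ∧
      M * P = P * (reindex (finSumFinEquiv.trans (finCongr hrq))
        (finSumFinEquiv.trans (finCongr hrq)) (fromBlocks E₁ 0 0 N₀)) := by
  classical
  set f : (Fin n → ℝ) →ₗ[ℝ] (Fin n → ℝ) := M.mulVecLin with hf
  have hfap : ∀ y : Fin n → ℝ, f y = M *ᵥ y := fun y => rfl
  set W : Submodule ℝ (Fin n → ℝ) := LinearMap.range (f ∘ₗ f) with hW
  set K : Submodule ℝ (Fin n → ℝ) := LinearMap.ker (f ∘ₗ f) with hK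
  have hcore' : ∀ z, z ∈ W → f z = 0 → z = 0 := by
    rintro z ⟨u, rfl⟩ hz
    exact hcore u hz
  have hdisj : Disjoint W K := by
    rw [Submodule.disjoint_def]
    rintro z hzW hzK
    have hzK' : f (f z) = 0 := hzK
    obtain ⟨u, rfl⟩ := hzW
    have h1 : f (f (f (f u))) = 0 := hzK'
    have h2 : f (f (f u)) = 0 := hcore (f u) h1
    exact hcore u h2
  have hrn := LinearMap.finrank_range_add_finrank_ker (f ∘ₗ f)
  have hn : Module.finrank ℝ (Fin n → ℝ) = n := by simp
  have hcompl : IsCompl W K := by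
    refine ⟨hdisj, codisjoint_iff.mpr ?_⟩
    exact Submodule.eq_top_of_disjoint W K (by rw [hrn, hn]) hdisj
  have hrq : Module.finrank ℝ W + Module.finrank ℝ K = n := hrn.trans hn
  refine ⟨Module.finrank ℝ W, Module.finrank ℝ K, hrq, ?_⟩
  set r := Module.finrank ℝ W
  set q := Module.finrank ℝ K
  have hfW : ∀ z ∈ W, f z ∈ W := by
    rintro z ⟨u, rfl⟩
    exact ⟨f u, rfl⟩
  have hfK : ∀ z ∈ K, f z ∈ K := by
    intro z hz
    have hz' : f (f z) = 0 := hz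
    show f (f (f z)) = 0
    rw [hz', map_zero]
  set bW : Module.Basis (Fin r) ℝ W := Module.finBasis ℝ W with hbW
  set bK : Module.Basis (Fin q) ℝ K := Module.finBasis ℝ K with hbK
  set pe := Submodule.prodEquivOfIsCompl W K hcompl with hpe
  set B : Module.Basis (Fin r ⊕ Fin q) ℝ (Fin n → ℝ) := (bW.prod bK).map pe with hB
  have hsymW : ∀ m : W, pe.symm ↑m = (m, (0 : K)) := by
    intro m
    rw [LinearEquiv.symm_apply_eq, Submodule.coe_prodEquivOfIsCompl']
    simp
  have hsymK : ∀ m : K, pe.symm ↑m = ((0 : W), m) := by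
    intro m
    rw [LinearEquiv.symm_apply_eq, Submodule.coe_prodEquivOfIsCompl']
    simp
  have hreprW0 : ∀ (m : W) (i : Fin q), B.repr ↑m (Sum.inr i) = 0 := by
    intro m i
    rw [hB, Module.Basis.map_repr]
    simp only [LinearEquiv.trans_apply]
    rw [hsymW m, Module.Basis.prod_repr_inr]
    simp
  have hreprWl : ∀ (m : W) (i : Fin r), B.repr ↑m (Sum.inl i) = bW.repr m i := by
    intro m i
    rw [hB, Module.Basis.map_repr]
    simp only [LinearEquiv.trans_apply]
    rw [hsymW m, Module.Basis.prod_repr_inl]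
  have hreprK0 : ∀ (m : K) (i : Fin r), B.repr ↑m (Sum.inl i) = 0 := by
    intro m i
    rw [hB, Module.Basis.map_repr]
    simp only [LinearEquiv.trans_apply]
    rw [hsymK m, Module.Basis.prod_repr_inl]
    simp
  have hreprKr : ∀ (m : K) (i : Fin q), B.repr ↑m (Sum.inr i) = bK.repr m i := by
    intro m i
    rw [hB, Module.Basis.map_repr]
    simp only [LinearEquiv.trans_apply]
    rw [hsymK m, Module.Basis.prod_repr_inr]
  have hpeW : ∀ m : W, pe (m, (0 : K)) = ↑m := by
    intro m
    rw [← hsymW m, LinearEquiv.apply_symm_apply]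
  have hpeK : ∀ m : K, pe ((0 : W), m) = ↑m := by
    intro m
    rw [← hsymK m, LinearEquiv.apply_symm_apply]
  have hBinl : ∀ i : Fin r, B (Sum.inl i) = ↑(bW i) := by
    intro i
    have hpr : (bW.prod bK) (Sum.inl i) = (bW i, (0 : K)) :=
      Prod.ext (Module.Basis.prod_apply_inl_fst bW bK i) (Module.Basis.prod_apply_inl_snd bW bK i)
    rw [hB, Module.Basis.map_apply, hpr, hpeW]
  have hBinr : ∀ i : Fin q, B (Sum.inr i) = ↑(bK i) := by
    intro i
    have hpr : (bW.prod bK) (Sum.inr i) = ((0 : W), bK i) :=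
      Prod.ext (Module.Basis.prod_apply_inr_fst bW bK i) (Module.Basis.prod_apply_inr_snd bW bK i)
    rw [hB, Module.Basis.map_apply, hpr, hpeK]
  set Mf := LinearMap.toMatrix B B f with hMfdef
  set fW : W →ₗ[ℝ] W := f.restrict hfW with hfWdef
  set fK : K →ₗ[ℝ] K := f.restrict hfK with hfKdef
  set E₁ : Matrix (Fin r) (Fin r) ℝ := LinearMap.toMatrix bW bW fW with hE₁def
  set N₀ : Matrix (Fin q) (Fin q) ℝ := LinearMap.toMatrix bK bK fK with hN₀def
  have hMfblocks : Mf = fromBlocks E₁ 0 0 N₀ := by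
    ext i j
    rcases i with i | i <;> rcases j with j | j
    · rw [hMfdef, LinearMap.toMatrix_apply, hBinl]
      have : f ↑(bW j) = ↑(fW (bW j)) := (LinearMap.restrict_coe_apply f hfW _).symm
      rw [this, hreprWl, Matrix.fromBlocks_apply₁₁, hE₁def, LinearMap.toMatrix_apply]
    · rw [hMfdef, LinearMap.toMatrix_apply, hBinr]
      have : f ↑(bK j) = ↑(fK (bK j)) := (LinearMap.restrict_coe_apply f hfK _).symm
      rw [this, hreprK0, Matrix.fromBlocks_apply₁₂]
      simp
    · rw [hMfdef, LinearMap.toMatrix_apply, hBinl]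
      have : f ↑(bW j) = ↑(fW (bW j)) := (LinearMap.restrict_coe_apply f hfW _).symm
      rw [this, hreprW0, Matrix.fromBlocks_apply₂₁]
      simp
    · rw [hMfdef, LinearMap.toMatrix_apply, hBinr]
      have : f ↑(bK j) = ↑(fK (bK j)) := (LinearMap.restrict_coe_apply f hfK _).symm
      rw [this, hreprKr, Matrix.fromBlocks_apply₂₂, hN₀def, LinearMap.toMatrix_apply]
  have hfWinj : Function.Injective fW := by
    rw [← LinearMap.ker_eq_bot, Submodule.eq_bot_iff]
    rintro ⟨z, hz⟩ h
    have h' : f z = 0 := congrArg Subtype.val h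
    exact Subtype.ext (hcore' z hz h')
  have hE₁unit : IsUnit E₁.det := by
    rw [← Matrix.isUnit_iff_isUnit_det]
    have : IsUnit fW := by
      rw [LinearMap.isUnit_iff_ker_eq_bot]
      exact LinearMap.ker_eq_bot.mpr hfWinj
    exact this.map (LinearMap.toMatrixAlgEquiv bW)
  have hN₀sq : N₀ * N₀ = 0 := by
    have hcomp : fK ∘ₗ fK = 0 := by
      apply LinearMap.ext
      intro z
      apply Subtype.ext
      show ((fK (fK z)) : Fin n → ℝ) = ((0 : K) : Fin n → ℝ)
      rw [LinearMap.restrict_coe_apply, LinearMap.restrict_coe_apply]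
      exact z.2
    rw [hN₀def, ← LinearMap.toMatrix_comp bK bK bK, hcomp, LinearEquiv.map_zero]
  set e : (Fin r ⊕ Fin q) ≃ Fin n :=
    finSumFinEquiv.trans (finCongr hrq) with he
  set B' : Module.Basis (Fin n) ℝ (Fin n → ℝ) := B.reindex e with hB'
  set stdB : Module.Basis (Fin n) ℝ (Fin n → ℝ) := Pi.basisFun ℝ (Fin n) with hstdB
  set P : Matrix (Fin n) (Fin n) ℝ := stdB.toMatrix ⇑B' with hP
  have hPunit : IsUnit P := by
    have := Module.Basis.invertibleToMatrix stdB B'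
    exact isUnit_of_invertible P
  have hMf' : LinearMap.toMatrix B' B' f = reindex e e Mf := by
    ext i j
    rw [LinearMap.toMatrix_apply, hB', Module.Basis.reindex_apply, Module.Basis.repr_reindex_apply]
    rw [reindex_apply, submatrix_apply, hMfdef, LinearMap.toMatrix_apply]
  have hstd : LinearMap.toMatrix stdB stdB f = M := by
    ext i j
    rw [LinearMap.toMatrix_apply]
    simp [hf, hstdB, Matrix.mulVec_single]
  have hkey : M * P = P * (reindex e e Mf) := by
    rw [← hMf', ← hstd, hP]
    rw [linearMap_toMatrix_mul_basis_toMatrix, basis_toMatrix_mul_linearMap_toMatrix]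
  exact ⟨P, E₁, N₀, hPunit, hE₁unit, hN₀sq, by rw [hkey, hMfblocks]⟩

lemma aux_requiv {r q n : ℕ} (e : (Fin r ⊕ Fin q) ≃ Fin n)
    (M : Matrix (Fin r ⊕ Fin q) (Fin r ⊕ Fin q) ℝ) :
    reindex e e M = reindexAlgEquiv ℝ ℝ e M := (reindexAlgEquiv_apply ℝ ℝ e M).symm

lemma aux_reindex_mul {r q n : ℕ} (e : (Fin r ⊕ Fin q) ≃ Fin n)
    (M N : Matrix (Fin r ⊕ Fin q) (Fin r ⊕ Fin q) ℝ) :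
    (reindex e e M) * (reindex e e N) = reindex e e (M * N) := by
  rw [aux_requiv, aux_requiv, aux_requiv, ← _root_.map_mul]

lemma aux_reindex_aff {r q n : ℕ} (e : (Fin r ⊕ Fin q) ≃ Fin n) (l : ℝ)
    (M : Matrix (Fin r ⊕ Fin q) (Fin r ⊕ Fin q) ℝ) :
    l • (reindex e e M) - 1 = reindex e e (l • M - 1) := by
  rw [aux_requiv, aux_requiv, _root_.map_sub, _root_.map_smul, _root_.map_one]

lemma aux_fb_aff {r q : ℕ} (l : ℝ) (E₁ : Matrix (Fin r) (Fin r) ℝ)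
    (N₀ : Matrix (Fin q) (Fin q) ℝ) :
    l • fromBlocks E₁ 0 0 N₀ - 1 = fromBlocks (l • E₁ - 1) 0 0 (l • N₀ - 1) := by
  rw [← fromBlocks_one, Matrix.fromBlocks_smul, sub_eq_add_neg, Matrix.fromBlocks_neg,
    Matrix.fromBlocks_add]
  simp [sub_eq_add_neg]

/-- A regular pH pencil has index at most two: it admits a
quasi-Weierstrass form `X E Y = diag(I, N)`, `X A Y = diag(A₁, I)` with `N² = 0`. -/
theorem pH_index_at_most_two {n : ℕ}
    (E J R Q : Matrix (Fin n) (Fin n) ℝ)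
    (hJ : Jᵀ = -J) (hEQ : (Eᵀ * Q).PosSemidef) (hR : (Qᵀ * R * Q).PosSemidef)
    (hreg : ∃ α β : ℂ, (α • toC E - β • toC ((J - R) * Q)).det ≠ 0) :
    ∃ (r q : ℕ) (hrq : r + q = n) (X Y : Matrix (Fin n) (Fin n) ℝ)
      (A₁ : Matrix (Fin r) (Fin r) ℝ) (N : Matrix (Fin q) (Fin q) ℝ),
      IsUnit X ∧ IsUnit Y ∧ N * N = 0 ∧
      X * E * Y =
        (reindex (finSumFinEquiv.trans (finCongr hrq))
          (finSumFinEquiv.trans (finCongr hrq))) (fromBlocks 1 0 0 N) ∧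
      X * ((J - R) * Q) * Y =
        (reindex (finSumFinEquiv.trans (finCongr hrq))
          (finSumFinEquiv.trans (finCongr hrq))) (fromBlocks A₁ 0 0 1) := by
  classical
  obtain ⟨l, hl, hS⟩ := aux_exists_lambda E ((J - R) * Q) hreg
  set S : Matrix (Fin n) (Fin n) ℝ := l • E - (J - R) * Q with hSdef
  set Eh : Matrix (Fin n) (Fin n) ℝ := S⁻¹ * E with hEhdef
  obtain ⟨r, q, hrq, P, E₁, N₀, hPu, hE₁, hN₀, hkey⟩ :=
    aux_decomp Eh (fun x hx => aux_core E J R Q hJ hEQ hR hl hS x hx)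
  set e : (Fin r ⊕ Fin q) ≃ Fin n := finSumFinEquiv.trans (finCongr hrq) with he
  set G : Matrix (Fin n) (Fin n) ℝ := reindex e e (fromBlocks E₁ 0 0 N₀) with hG
  have hPdet : IsUnit P.det := (Matrix.isUnit_iff_isUnit_det P).mp hPu
  have hNV : (-1 - l • N₀) * N₀ = -N₀ := by
    simp [sub_mul, Matrix.smul_mul, hN₀]
  have hV : (-1 - l • N₀) * (l • N₀ - 1) = 1 := by
    simp [sub_mul, mul_sub, Matrix.smul_mul, Matrix.mul_smul, hN₀, smul_smul]
    abel
  set D : Matrix (Fin r ⊕ Fin q) (Fin r ⊕ Fin q) ℝ :=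
    fromBlocks E₁⁻¹ 0 0 (-1 - l • N₀) with hD
  have hinv1 : IsUnit E₁⁻¹ := by
    have := invertibleOfRightInverse E₁⁻¹ E₁ (Matrix.nonsing_inv_mul E₁ hE₁)
    exact isUnit_of_invertible _
  have hinv2 : IsUnit (-1 - l • N₀) := by
    have := invertibleOfRightInverse _ _ hV
    exact isUnit_of_invertible _
  refine ⟨r, q, hrq, (reindex e e D) * P⁻¹ * S⁻¹, P, E₁⁻¹ * (l • E₁ - 1), -N₀,
    ?_, hPu, ?_, ?_, ?_⟩
  · have h1 : IsUnit (reindex e e D) := by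
      rw [Matrix.isUnit_iff_isUnit_det, Matrix.det_reindex_self, hD,
        Matrix.det_fromBlocks_zero₂₁]
      exact ((Matrix.isUnit_iff_isUnit_det _).mp hinv1).mul
        ((Matrix.isUnit_iff_isUnit_det _).mp hinv2)
    have h2 : IsUnit (P⁻¹ : Matrix (Fin n) (Fin n) ℝ) := by
      have := invertibleOfRightInverse P⁻¹ P (Matrix.nonsing_inv_mul P hPdet)
      exact isUnit_of_invertible _
    have h3 : IsUnit (S⁻¹ : Matrix (Fin n) (Fin n) ℝ) := by
      have := invertibleOfRightInverse S⁻¹ S (Matrix.nonsing_inv_mul S hS)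
      exact isUnit_of_invertible _
    exact (h1.mul h2).mul h3
  · rw [neg_mul_neg]
    exact hN₀
  · -- X E Y
    have hDmul : D * fromBlocks E₁ 0 0 N₀ = fromBlocks 1 0 0 (-N₀) := by
      rw [hD, fromBlocks_multiply]
      simp [Matrix.nonsing_inv_mul E₁ hE₁, hNV]
    calc reindex e e D * P⁻¹ * S⁻¹ * E * P
        = reindex e e D * (P⁻¹ * (Eh * P)) := by
          rw [hEhdef]; simp only [Matrix.mul_assoc]
      _ = reindex e e D * G := by
          rw [hkey, ← Matrix.mul_assoc P⁻¹ P G, Matrix.nonsing_inv_mul P hPdet, Matrix.one_mul]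
      _ = reindex e e (D * fromBlocks E₁ 0 0 N₀) := by rw [hG, aux_reindex_mul]
      _ = _ := by rw [hDmul]
  · -- X A Y
    have hSA : S⁻¹ * ((J - R) * Q) = l • Eh - 1 := by
      have h1 : (J - R) * Q = l • E - S := by rw [hSdef, sub_sub_cancel]
      rw [h1, Matrix.mul_sub, Matrix.mul_smul, Matrix.nonsing_inv_mul S hS, ← hEhdef]
    have hSA2 : S⁻¹ * ((J - R) * (Q * P)) = (l • Eh - 1) * P := by
      rw [← Matrix.mul_assoc (J - R) Q P, ← Matrix.mul_assoc, hSA]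
    have hstep : (l • Eh - 1) * P = P * (l • G - 1) := by
      rw [Matrix.sub_mul, Matrix.smul_mul, hkey, Matrix.one_mul, Matrix.mul_sub,
        Matrix.mul_smul, Matrix.mul_one]
    have hDmul2 : D * fromBlocks (l • E₁ - 1) 0 0 (l • N₀ - 1)
        = fromBlocks (E₁⁻¹ * (l • E₁ - 1)) 0 0 1 := by
      rw [hD, fromBlocks_multiply]
      simp [hV]
    calc reindex e e D * P⁻¹ * S⁻¹ * ((J - R) * Q) * P
        = reindex e e D * (P⁻¹ * (S⁻¹ * ((J - R) * (Q * P)))) := by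
          simp only [Matrix.mul_assoc]
      _ = reindex e e D * (P⁻¹ * (P * (l • G - 1))) := by rw [hSA2, hstep]
      _ = reindex e e D * (l • G - 1) := by
          rw [← Matrix.mul_assoc P⁻¹ P _, Matrix.nonsing_inv_mul P hPdet, Matrix.one_mul]
      _ = reindex e e D * reindex e e (fromBlocks (l • E₁ - 1) 0 0 (l • N₀ - 1)) := by
          rw [hG, aux_reindex_aff, aux_fb_aff]
      _ = _ := by rw [aux_reindex_mul, hDmul2]
end

section
/- If a descriptor system (E,A,B,C,D) is port-Hamiltonian with pH decomposition matrices J, R, Q ∈ ℝ^{n×n} and G, P ∈ ℝ^{n×m}, then this matrix Q satisfies the KYP inequality: the matrix [[A^T Q + Q^T A, Q^T B − C^T],[B^T Q − C, −D − D^T]] is negative semidefinite (and E^T Q is symmetric positive semidefinite). -/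
open Matrix
open scoped ComplexOrder

/-- For a pH system, the pH matrix `Q` satisfies the KYP inequality. -/
theorem pH_implies_KYP {n m : ℕ}
    (E A J R Q : Matrix (Fin n) (Fin n) ℝ)
    (B G P : Matrix (Fin n) (Fin m) ℝ)
    (C : Matrix (Fin m) (Fin n) ℝ) (D : Matrix (Fin m) (Fin m) ℝ)
    (hA : A = (J - R) * Q) (hB : B = G - P) (hC : C = (G + P)ᵀ * Q)
    (hJ : Jᵀ = -J) (hEQ : (Eᵀ * Q).PosSemidef)
    (hblock : (fromBlocks (Qᵀ * R * Q) (Qᵀ * P) (Pᵀ * Q)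
      ((1/2 : ℝ) • (D + Dᵀ))).PosSemidef) :
    (-(KYPmatrix A B C D Q)).PosSemidef ∧ (Eᵀ * Q).PosSemidef := by
  refine ⟨?_, hEQ⟩
  subst hA hB hC
  have e11 : -(((J - R) * Q)ᵀ * Q + Qᵀ * ((J - R) * Q))
      = Qᵀ * R * Q + (Qᵀ * R * Q)ᵀ := by
    simp only [Matrix.transpose_mul, Matrix.transpose_sub, hJ,
      Matrix.transpose_transpose]
    noncomm_ring
  have e12 : -(Qᵀ * (G - P) - ((G + P)ᵀ * Q)ᵀ) = Qᵀ * P + (Pᵀ * Q)ᵀ := by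
    simp only [Matrix.transpose_mul, Matrix.transpose_add, Matrix.transpose_transpose,
      Matrix.mul_sub, Matrix.mul_add]
    abel
  have e21 : -((G - P)ᵀ * Q - (G + P)ᵀ * Q) = Pᵀ * Q + (Qᵀ * P)ᵀ := by
    simp only [Matrix.transpose_mul, Matrix.transpose_add, Matrix.transpose_sub,
      Matrix.transpose_transpose, Matrix.sub_mul, Matrix.add_mul]
    abel
  have e22 : -(-D - Dᵀ) = (1/2 : ℝ) • (D + Dᵀ) + ((1/2 : ℝ) • (D + Dᵀ))ᵀ := by
    rw [Matrix.transpose_smul, Matrix.transpose_add, Matrix.transpose_transpose]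
    ext i j
    simp [Matrix.add_apply, Matrix.neg_apply, Matrix.sub_apply, Matrix.smul_apply]
    ring
  have key : -(KYPmatrix ((J - R) * Q) (G - P) ((G + P)ᵀ * Q) D Q)
      = fromBlocks (Qᵀ * R * Q) (Qᵀ * P) (Pᵀ * Q) ((1/2 : ℝ) • (D + Dᵀ))
        + (fromBlocks (Qᵀ * R * Q) (Qᵀ * P) (Pᵀ * Q) ((1/2 : ℝ) • (D + Dᵀ)))ᵀ := by
    rw [KYPmatrix, fromBlocks_transpose, fromBlocks_add, fromBlocks_neg, e11, e12, e21, e22]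
  rw [key]
  exact hblock.add hblock.transpose
end

section
/- If for a descriptor system (E,A,B,C,D) there exists an invertible matrix Q ∈ ℝ^{n×n} such that the matrix [[A^T Q + Q^T A, Q^T B − C^T],[B^T Q − C, −D − D^T]] is negative semidefinite and E^T Q is symmetric positive semidefinite, then the system (E,A,B,C,D) is port-Hamiltonian. -/
open Matrix
open scoped ComplexOrder

lemma psd_smul_aux {k : Type*} [Fintype k] (M : Matrix k k ℝ) (c : ℝ) (hc : 0 ≤ c)
    (h : M.PosSemidef) : (c • M).PosSemidef := by
  refine ⟨?_, fun x => ?_⟩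
  · unfold Matrix.IsHermitian
    rw [Matrix.conjTranspose_smul, h.1, star_trivial]
  · exact (h.smul hc).2 x

/-- If an invertible `Q` satisfies the KYP inequality with `EᵀQ ≥ 0`, then
the descriptor system is port-Hamiltonian. -/
theorem KYP_invertible_implies_pH {n m : ℕ}
    (E A : Matrix (Fin n) (Fin n) ℝ) (B : Matrix (Fin n) (Fin m) ℝ)
    (C : Matrix (Fin m) (Fin n) ℝ) (D : Matrix (Fin m) (Fin m) ℝ)
    (Q : Matrix (Fin n) (Fin n) ℝ) (hQ : IsUnit Q)
    (hkyp : (-(KYPmatrix A B C D Q)).PosSemidef)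
    (hEQ : (Eᵀ * Q).PosSemidef) :
    IsPortHamiltonian E A B C D := by
  have hdet : IsUnit Q.det := (Matrix.isUnit_iff_isUnit_det Q).mp hQ
  have hQi : Q⁻¹ * Q = 1 := Matrix.nonsing_inv_mul Q hdet
  set X := A * Q⁻¹ with hX
  refine ⟨(2⁻¹ : ℝ) • (X - Xᵀ), (2⁻¹ : ℝ) • (-X - Xᵀ), Q,
    (2⁻¹ : ℝ) • (B + Q⁻¹ᵀ * Cᵀ), (2⁻¹ : ℝ) • (Q⁻¹ᵀ * Cᵀ - B), ?_, ?_, ?_, ?_, hEQ, ?_⟩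
  · have h1 : ((2⁻¹ : ℝ) • (X - Xᵀ) - (2⁻¹ : ℝ) • (-X - Xᵀ)) = X := by
      rw [← smul_sub]; rw [show (X - Xᵀ - (-X - Xᵀ)) = (2:ℝ) • X by module]
      rw [smul_smul]; norm_num
    rw [h1, hX, Matrix.mul_assoc, hQi, Matrix.mul_one]
  · rw [← smul_sub]
    rw [show (B + Q⁻¹ᵀ * Cᵀ - (Q⁻¹ᵀ * Cᵀ - B)) = (2:ℝ) • B by module]
    rw [smul_smul]; norm_num
  · rw [← smul_add]
    rw [show (B + Q⁻¹ᵀ * Cᵀ + (Q⁻¹ᵀ * Cᵀ - B)) = (2:ℝ) • (Q⁻¹ᵀ * Cᵀ) by module]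
    rw [smul_smul]
    norm_num
    exact (Matrix.nonsing_inv_mul_cancel_right Q C hdet).symm
  · rw [Matrix.transpose_smul, Matrix.transpose_sub, Matrix.transpose_transpose, ← smul_neg,
      neg_sub]
  · have hQQ : Qᵀ * Q⁻¹ᵀ = 1 := by
      rw [← Matrix.transpose_mul, hQi, Matrix.transpose_one]
    have e1 : Qᵀ * ((2⁻¹ : ℝ) • (-X - Xᵀ)) * Q = (2⁻¹ : ℝ) • (-(Aᵀ * Q + Qᵀ * A)) := by
      rw [Matrix.mul_smul, Matrix.smul_mul]
      congr 1
      rw [hX, Matrix.transpose_mul]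
      rw [Matrix.mul_sub, Matrix.sub_mul, Matrix.mul_neg, Matrix.neg_mul]
      rw [Matrix.mul_assoc Qᵀ, Matrix.mul_assoc A, hQi, Matrix.mul_one]
      rw [show Qᵀ * (Q⁻¹ᵀ * Aᵀ) * Q = (Qᵀ * Q⁻¹ᵀ) * Aᵀ * Q by
        rw [Matrix.mul_assoc Qᵀ Q⁻¹ᵀ]]
      rw [hQQ, Matrix.one_mul]
      abel
    have e2 : Qᵀ * ((2⁻¹ : ℝ) • (Q⁻¹ᵀ * Cᵀ - B)) = (2⁻¹ : ℝ) • (Cᵀ - Qᵀ * B) := by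
      rw [Matrix.mul_smul]
      congr 1
      rw [Matrix.mul_sub, ← Matrix.mul_assoc, hQQ, Matrix.one_mul]
    have e3 : ((2⁻¹ : ℝ) • (Q⁻¹ᵀ * Cᵀ - B))ᵀ * Q = (2⁻¹ : ℝ) • (C - Bᵀ * Q) := by
      rw [Matrix.transpose_smul, Matrix.smul_mul]
      congr 1
      rw [Matrix.transpose_sub, Matrix.transpose_mul, Matrix.transpose_transpose,
        Matrix.sub_mul, Matrix.transpose_transpose, Matrix.nonsing_inv_mul_cancel_right Q C hdet]
    rw [e2, e3]
    have key : Matrix.fromBlocks (Qᵀ * ((2⁻¹ : ℝ) • (-X - Xᵀ)) * Q)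
        ((2⁻¹ : ℝ) • (Cᵀ - Qᵀ * B)) ((2⁻¹ : ℝ) • (C - Bᵀ * Q))
        ((1/2 : ℝ) • (D + Dᵀ)) = (2⁻¹ : ℝ) • (-(KYPmatrix A B C D Q)) := by
      rw [e1, KYPmatrix, Matrix.fromBlocks_neg, Matrix.fromBlocks_smul,
        show ((2⁻¹:ℝ)) • (Cᵀ - Qᵀ * B) = ((2⁻¹:ℝ)) • (-(Qᵀ * B - Cᵀ)) by module,
        show ((2⁻¹:ℝ)) • (C - Bᵀ * Q) = ((2⁻¹:ℝ)) • (-(Bᵀ * Q - C)) by module,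
        show ((1/2:ℝ)) • (D + Dᵀ) = ((2⁻¹:ℝ)) • (-(-D - Dᵀ)) by module]
    rw [key]
    exact psd_smul_aux _ _ (by norm_num) hkyp
end

section
/- The linear (polynomial) part of a positive real transfer function is symmetric positive semidefinite: let A₁ ∈ ℝ^{n₁×n₁} have no eigenvalue with positive real part, let B₁ ∈ ℝ^{n₁×m}, C₁ ∈ ℝ^{m×n₁}, D₀ ∈ ℝ^{m×m}, M ∈ ℝ^{m×m}, and suppose that for every s ∈ ℂ with Re(s) > 0 the matrix T(s) + T(s)^H is positive semidefinite, where T(s) = C₁(sI − A₁)^{-1}B₁ + D₀ + s·M. Then M = M^T, M is positive semidefinite, and for every s ∈ ℂ with Re(s) > 0 the matrix G(s) + G(s)^H is positive semidefinite, where G(s) = C₁(sI − A₁)^{-1}B₁ + D₀. -/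
open Matrix
open scoped ComplexOrder

set_option maxHeartbeats 1600000

open Filter Metric Set
open scoped Topology


section LPHelpers

private lemma lp_le_zero (a L : ℝ) (φ : ℝ → ℝ) (h : ∀ᶠ t in atTop, t * a ≤ φ t)
    (hφ : Tendsto φ atTop (𝓝 L)) : a ≤ 0 := by
  by_contra h'
  push_neg at h'
  have h1 : Tendsto (fun t : ℝ => t * a) atTop atTop :=
    Tendsto.atTop_mul_const h' tendsto_id
  have h2 : Tendsto φ atTop atTop := tendsto_atTop_mono' atTop h h1
  exact not_tendsto_nhds_of_tendsto_atTop h2 L hφ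

private lemma lp_diff_prod {ι : Type*} (u : Finset ι) (f : ι → ℂ → ℂ)
    (h : ∀ i, Differentiable ℂ (f i)) : Differentiable ℂ (fun s => ∏ i ∈ u, f i s) := by
  classical
  induction u using Finset.induction with
  | empty => simp only [Finset.prod_empty]; exact differentiable_const (1:ℂ)
  | insert a s hne ih =>
    simp only [Finset.prod_insert hne]
    exact (h _).mul ih

private lemma lp_diff_det {k : ℕ} (f : ℂ → Matrix (Fin k) (Fin k) ℂ)
    (h : ∀ i j, Differentiable ℂ (fun s => f s i j)) :
    Differentiable ℂ (fun s => (f s).det) := by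
  simp only [Matrix.det_apply']
  apply Differentiable.fun_sum
  intro σ _
  exact (lp_diff_prod Finset.univ _ (fun i => h (σ i) i)).const_mul _

private lemma lp_diff_entry {k : ℕ} (N : Matrix (Fin k) (Fin k) ℂ) (i j : Fin k) :
    Differentiable ℂ (fun s : ℂ => (s • (1 : Matrix (Fin k) (Fin k) ℂ) - N) i j) := by
  simp only [Matrix.sub_apply, Matrix.smul_apply, smul_eq_mul]
  exact (differentiable_id.mul (differentiable_const _)).sub (differentiable_const _)

private lemma lp_diff_det' {k : ℕ} (N : Matrix (Fin k) (Fin k) ℂ) :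
    Differentiable ℂ (fun s : ℂ => (s • (1 : Matrix (Fin k) (Fin k) ℂ) - N).det) :=
  lp_diff_det _ (lp_diff_entry N)

private lemma lp_diff_adj {k : ℕ} (N : Matrix (Fin k) (Fin k) ℂ) (i j : Fin k) :
    Differentiable ℂ (fun s : ℂ => (s • (1 : Matrix (Fin k) (Fin k) ℂ) - N).adjugate i j) := by
  simp only [Matrix.adjugate_apply]
  apply lp_diff_det
  intro a b
  simp only [Matrix.updateRow_apply]
  by_cases hab : a = j
  · simp [hab]
  · simp only [hab, if_false]
    exact lp_diff_entry N a b

private lemma lp_diff_F {k : ℕ} (N : Matrix (Fin k) (Fin k) ℂ) (w v : Fin k → ℂ) (c : ℂ)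
    {s₀ : ℂ} (h : (s₀ • (1 : Matrix (Fin k) (Fin k) ℂ) - N).det ≠ 0) :
    DifferentiableAt ℂ (fun s : ℂ =>
      w ⬝ᵥ ((s • (1 : Matrix (Fin k) (Fin k) ℂ) - N)⁻¹ *ᵥ v) + c) s₀ := by
  have hrw : ∀ s : ℂ, w ⬝ᵥ ((s • (1 : Matrix (Fin k) (Fin k) ℂ) - N)⁻¹ *ᵥ v) + c
      = ((s • (1 : Matrix (Fin k) (Fin k) ℂ) - N).det)⁻¹ *
        (w ⬝ᵥ ((s • (1 : Matrix (Fin k) (Fin k) ℂ) - N).adjugate *ᵥ v)) + c := by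
    intro s
    rw [Matrix.inv_def, Ring.inverse_eq_inv']
    simp [Matrix.smul_mulVec, dotProduct_smul, smul_eq_mul]
  simp only [hrw]
  apply DifferentiableAt.add_const
  apply DifferentiableAt.mul
  · exact ((lp_diff_det' N).differentiableAt).inv h
  · have : Differentiable ℂ (fun s : ℂ =>
        w ⬝ᵥ ((s • (1 : Matrix (Fin k) (Fin k) ℂ) - N).adjugate *ᵥ v)) := by
      simp only [dotProduct, Matrix.mulVec, dotProduct]
      apply Differentiable.fun_sum
      intro i _
      apply Differentiable.const_mul
      apply Differentiable.fun_sum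
      intro j _
      exact (lp_diff_adj N i j).mul_const _
    exact this.differentiableAt

private lemma lp_inv_eq {k : ℕ} (N : Matrix (Fin k) (Fin k) ℂ) (s : ℂ) (hs : s ≠ 0) :
    (s • (1 : Matrix (Fin k) (Fin k) ℂ) - N)⁻¹
      = s⁻¹ • ((1 : Matrix (Fin k) (Fin k) ℂ) - s⁻¹ • N)⁻¹ := by
  set B : Matrix (Fin k) (Fin k) ℂ := (1 : Matrix (Fin k) (Fin k) ℂ) - s⁻¹ • N with hB
  have key : s • (1 : Matrix (Fin k) (Fin k) ℂ) - N = s • B := by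
    rw [hB, smul_sub, smul_smul, mul_inv_cancel₀ hs, one_smul]
  rw [key]
  by_cases hdet : IsUnit B.det
  · have hdet' : IsUnit (s • B).det := by
      rw [Matrix.det_smul]
      simp only [isUnit_iff_ne_zero] at hdet ⊢
      exact mul_ne_zero (pow_ne_zero _ hs) hdet
    apply Matrix.inv_eq_left_inv
    rw [Matrix.smul_mul, Matrix.mul_smul, smul_smul, inv_mul_cancel₀ hs, one_smul,
      Matrix.nonsing_inv_mul B hdet]
  · have h1 : ¬ IsUnit (s • B).det := by
      rw [Matrix.det_smul]
      simp only [isUnit_iff_ne_zero, not_not] at hdet ⊢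
      simp [hdet]
    rw [Matrix.nonsing_inv_apply_not_isUnit _ h1, Matrix.nonsing_inv_apply_not_isUnit _ hdet,
      smul_zero]

private lemma lp_tendsto_inv_zero {k : ℕ} (N : Matrix (Fin k) (Fin k) ℂ) (g : ℝ → ℂ)
    (hg : Tendsto (fun t => ‖g t‖) atTop atTop) :
    Tendsto (fun t => ((g t) • (1 : Matrix (Fin k) (Fin k) ℂ) - N)⁻¹) atTop (𝓝 0) := by
  set h : ℂ → Matrix (Fin k) (Fin k) ℂ :=
    fun z => z • ((1 : Matrix (Fin k) (Fin k) ℂ) - z • N)⁻¹ with hh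
  have hcont : ContinuousAt h 0 := by
    have h1 : ContinuousAt Inv.inv ((1 : Matrix (Fin k) (Fin k) ℂ) - (0:ℂ) • N) := by
      apply continuousAt_matrix_inv
      rw [Ring.inverse_eq_inv']
      simp only [zero_smul, sub_zero, Matrix.det_one]
      exact continuousAt_inv₀ one_ne_zero
    have h2 : ContinuousAt (fun z : ℂ => (1 : Matrix (Fin k) (Fin k) ℂ) - z • N) 0 :=
      ((continuous_const).sub (continuous_id.smul continuous_const)).continuousAt
    exact continuousAt_id.smul (ContinuousAt.comp (g := Inv.inv)
      (f := fun z : ℂ => (1 : Matrix (Fin k) (Fin k) ℂ) - z • N) (x := 0) h1 h2)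
  have h0 : h 0 = 0 := by simp [hh]
  have hinv : Tendsto (fun t => (g t)⁻¹) atTop (𝓝 (0:ℂ)) := by
    rw [tendsto_zero_iff_norm_tendsto_zero]
    simp only [norm_inv]
    exact hg.inv_tendsto_atTop
  have hcomp : Tendsto (fun t => h ((g t)⁻¹)) atTop (𝓝 0) := by
    rw [← h0]
    exact (hcont.tendsto).comp hinv
  apply hcomp.congr'
  have hev : ∀ᶠ t in atTop, 1 ≤ ‖g t‖ := hg.eventually_ge_atTop 1
  filter_upwards [hev] with t ht
  have hne : g t ≠ 0 := by
    intro h'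
    rw [h'] at ht; simp at ht; linarith
  rw [hh]
  exact (lp_inv_eq N (g t) hne).symm

private lemma lp_tendsto_F {k : ℕ} (N : Matrix (Fin k) (Fin k) ℂ) (w v : Fin k → ℂ) (c : ℂ)
    (g : ℝ → ℂ) (hg : Tendsto (fun t => ‖g t‖) atTop atTop) :
    Tendsto (fun t => w ⬝ᵥ (((g t) • (1 : Matrix (Fin k) (Fin k) ℂ) - N)⁻¹ *ᵥ v) + c)
      atTop (𝓝 c) := by
  have hc : Continuous (fun A : Matrix (Fin k) (Fin k) ℂ => w ⬝ᵥ (A *ᵥ v)) :=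
    (continuous_const.dotProduct (continuous_id.matrix_mulVec continuous_const))
  have h0 : w ⬝ᵥ ((0 : Matrix (Fin k) (Fin k) ℂ) *ᵥ v) = 0 := by simp
  have := (hc.continuousAt (x := (0 : Matrix (Fin k) (Fin k) ℂ))).tendsto.comp
    (lp_tendsto_inv_zero N g hg)
  rw [h0] at this
  simpa using this.add_const c

private noncomputable def lpF {n m : ℕ} (A₁ : Matrix (Fin n) (Fin n) ℝ)
    (B₁ : Matrix (Fin n) (Fin m) ℝ) (C₁ : Matrix (Fin m) (Fin n) ℝ)
    (D₀ : Matrix (Fin m) (Fin m) ℝ) (x : Fin m → ℂ) (s : ℂ) : ℂ :=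
  (star x ᵥ* toC C₁) ⬝ᵥ ((s • (1 : Matrix (Fin n) (Fin n) ℂ) - toC A₁)⁻¹ *ᵥ (toC B₁ *ᵥ x))
    + star x ⬝ᵥ (toC D₀ *ᵥ x)

private noncomputable def lpQ {m : ℕ} (M : Matrix (Fin m) (Fin m) ℝ) (x : Fin m → ℂ) : ℂ :=
  star x ⬝ᵥ (toC M *ᵥ x)

private lemma lp_eq1 {n m : ℕ} (A₁ : Matrix (Fin n) (Fin n) ℝ)
    (B₁ : Matrix (Fin n) (Fin m) ℝ) (C₁ : Matrix (Fin m) (Fin n) ℝ)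
    (D₀ : Matrix (Fin m) (Fin m) ℝ) (x : Fin m → ℂ) (s : ℂ) :
    star x ⬝ᵥ ((toC C₁ * (s • (1 : Matrix (Fin n) (Fin n) ℂ) - toC A₁)⁻¹ * toC B₁
      + toC D₀) *ᵥ x) = lpF A₁ B₁ C₁ D₀ x s := by
  rw [lpF, Matrix.add_mulVec, dotProduct_add, ← Matrix.mulVec_mulVec, ← Matrix.mulVec_mulVec,
    Matrix.dotProduct_mulVec]

private lemma lp_conj {m : ℕ} (P : Matrix (Fin m) (Fin m) ℂ) (x : Fin m → ℂ) :
    star x ⬝ᵥ (Pᴴ *ᵥ x) = star (star x ⬝ᵥ (P *ᵥ x)) := by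
  rw [Matrix.dotProduct_mulVec, star_dotProduct, star_star, ← Matrix.star_mulVec,
    dotProduct_comm]

private lemma lp_qsingle {m : ℕ} (M : Matrix (Fin m) (Fin m) ℝ) (j k : Fin m) :
    (lpQ M ((Pi.single j 1 : Fin m → ℂ) + Complex.I • (Pi.single k 1 : Fin m → ℂ))).im
      = M j k - M k j := by
  classical
  have hx : star ((Pi.single j 1 : Fin m → ℂ) + Complex.I • (Pi.single k 1 : Fin m → ℂ))
      = (Pi.single j 1 : Fin m → ℂ) + (-Complex.I) • (Pi.single k 1 : Fin m → ℂ) := by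
    funext a
    by_cases haj : a = j <;> by_cases hak : a = k <;>
        simp [haj, hak, Pi.single_apply, Complex.ext_iff] <;>
      split_ifs <;> simp
  rw [lpQ, hx]
  simp only [Matrix.mulVec_add, Matrix.mulVec_smul, dotProduct_add, add_dotProduct,
    dotProduct_smul, smul_dotProduct, Matrix.mulVec_single, smul_eq_mul, mul_one]
  have hsd : ∀ (i : Fin m) (v : Fin m → ℂ), (Pi.single i 1 : Fin m → ℂ) ⬝ᵥ v = v i := by
    intro i v; simp [single_dotProduct]
  simp only [hsd]
  simp only [toC, Matrix.map_apply]
  simp [Complex.add_im, Complex.mul_im, Complex.I_re, Complex.I_im, Complex.ofReal_re,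
    Complex.ofReal_im, Complex.neg_im, Complex.neg_re]
  ring

private lemma lp_re_w (s₀ : ℂ) (hs : 0 < s₀.re) {z : ℂ} (hz : ‖z‖ < 1) :
    0 < ((s₀ + (starRingEnd ℂ) s₀ * z) / (1 - z)).re := by
  have hzn : Complex.normSq z < 1 := by
    have := Complex.sq_norm z
    nlinarith [norm_nonneg z]
  have hd : (1 : ℂ) - z ≠ 0 := by
    intro h
    have : z = 1 := by linear_combination -h
    rw [this] at hz; simp at hz
  have hnd : 0 < Complex.normSq (1 - z) := Complex.normSq_pos.mpr hd
  rw [Complex.div_re]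
  have key : (s₀ + (starRingEnd ℂ) s₀ * z).re * (1 - z).re
      + (s₀ + (starRingEnd ℂ) s₀ * z).im * (1 - z).im
      = s₀.re * (1 - Complex.normSq z) := by
    simp [Complex.add_re, Complex.add_im, Complex.mul_re, Complex.mul_im, Complex.sub_re,
      Complex.sub_im, Complex.conj_re, Complex.conj_im, Complex.normSq_apply]
    ring
  rw [← add_div]
  rw [key]
  exact div_pos (by nlinarith) hnd

private lemma lp_julia (f : ℂ → ℂ) (q' : ℝ) (c : ℂ)
    (hdiff : ∀ s : ℂ, 0 < s.re → DifferentiableAt ℂ f s)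
    (hpos : ∀ s : ℂ, 0 < s.re → 0 < (f s).re)
    (hq' : 0 < q')
    (hlim : Tendsto (fun t : ℝ => f t - (t : ℂ) * (q' : ℂ)) atTop (𝓝 c)) :
    ∀ s₀ : ℂ, 0 < s₀.re → s₀.re * q' ≤ (f s₀).re := by
  intro s₀ hs₀
  set a := f s₀ with ha_def
  have ha : 0 < a.re := hpos s₀ hs₀
  set w : ℂ → ℂ := fun z => (s₀ + (starRingEnd ℂ) s₀ * z) / (1 - z) with hw_def
  set G : ℂ → ℂ := fun z => (f (w z) - a) / (f (w z) + (starRingEnd ℂ) a) with hG_def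
  have hwmem : ∀ z ∈ ball (0 : ℂ) 1, 0 < (w z).re := by
    intro z hz
    rw [mem_ball_zero_iff] at hz
    exact lp_re_w s₀ hs₀ hz
  have hw0 : w 0 = s₀ := by simp [hw_def]
  have hden : ∀ s : ℂ, 0 < s.re → f s + (starRingEnd ℂ) a ≠ 0 := by
    intro s hs h
    have := congrArg Complex.re h
    simp only [Complex.add_re, Complex.conj_re, Complex.zero_re] at this
    nlinarith [hpos s hs]
  have hGdiff : DifferentiableOn ℂ G (ball 0 1) := by
    intro z hz
    apply DifferentiableAt.differentiableWithinAt
    have h1 : (1 : ℂ) - z ≠ 0 := by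
      intro h
      have : z = 1 := by linear_combination -h
      rw [mem_ball_zero_iff, this] at hz; simp at hz
    have hwdiff : DifferentiableAt ℂ w z := by
      apply DifferentiableAt.div
      · exact (differentiableAt_const _).add ((differentiableAt_const _).mul differentiableAt_id)
      · exact (differentiableAt_const _).sub differentiableAt_id
      · exact h1
    have hfw : DifferentiableAt ℂ (fun z => f (w z)) z :=
      (hdiff _ (hwmem z hz)).comp z hwdiff
    exact ((hfw.sub_const a).div (hfw.add_const _) (hden _ (hwmem z hz)))
  have hGmaps : MapsTo G (ball 0 1) (ball 0 1) := by
    intro z hz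
    rw [mem_ball_zero_iff]
    have hre : 0 < (f (w z)).re := hpos _ (hwmem z hz)
    have hdne : f (w z) + (starRingEnd ℂ) a ≠ 0 := hden _ (hwmem z hz)
    rw [hG_def]
    simp only [norm_div]
    rw [div_lt_one (norm_pos_iff.mpr hdne)]
    have h2 : Complex.normSq (f (w z) - a) < Complex.normSq (f (w z) + (starRingEnd ℂ) a) := by
      simp only [Complex.normSq_apply, Complex.sub_re, Complex.sub_im, Complex.add_re,
        Complex.add_im, Complex.conj_re, Complex.conj_im]
      nlinarith [hre, ha]
    have h3 := Complex.sq_norm (f (w z) - a)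
    have h4 := Complex.sq_norm (f (w z) + (starRingEnd ℂ) a)
    nlinarith [norm_nonneg (f (w z) - a), norm_nonneg (f (w z) + (starRingEnd ℂ) a)]
  have hG0 : G 0 = 0 := by
    simp [hG_def, hw0, ← ha_def]
  have hkey : ∀ t : ℝ, 0 < t →
      Complex.normSq (f t - a) * Complex.normSq ((t : ℂ) + (starRingEnd ℂ) s₀)
        ≤ Complex.normSq ((t : ℂ) - s₀) * Complex.normSq (f t + (starRingEnd ℂ) a) := by
    intro t ht
    have hd1 : ((t : ℂ) + (starRingEnd ℂ) s₀) ≠ 0 := by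
      intro h
      have := congrArg Complex.re h
      simp only [Complex.add_re, Complex.conj_re, Complex.zero_re, Complex.ofReal_re] at this
      nlinarith
    set zt : ℂ := ((t : ℂ) - s₀) / ((t : ℂ) + (starRingEnd ℂ) s₀) with hzt_def
    have hnorm : Complex.normSq ((t:ℂ) - s₀) < Complex.normSq ((t:ℂ) + (starRingEnd ℂ) s₀) := by
      simp only [Complex.normSq_apply, Complex.sub_re, Complex.sub_im, Complex.add_re,
        Complex.add_im, Complex.conj_re, Complex.conj_im, Complex.ofReal_re, Complex.ofReal_im]
      nlinarith
    have hztball : ‖zt‖ < 1 := by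
      rw [hzt_def, norm_div, div_lt_one (norm_pos_iff.mpr hd1)]
      have h3 := Complex.sq_norm ((t:ℂ) - s₀)
      have h4 := Complex.sq_norm ((t:ℂ) + (starRingEnd ℂ) s₀)
      nlinarith [norm_nonneg ((t:ℂ) - s₀), norm_nonneg ((t:ℂ) + (starRingEnd ℂ) s₀)]
    have hd2 : (1 : ℂ) - zt ≠ 0 := by
      intro h
      have : zt = 1 := by linear_combination -h
      rw [this] at hztball; simp at hztball
    have hwzt : w zt = t := by
      rw [hw_def]
      simp only
      rw [div_eq_iff hd2, hzt_def]
      field_simp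
      ring
    have hschwarz := Complex.norm_le_norm_of_mapsTo_ball hGdiff (hGmaps.mono_right ball_subset_closedBall) hG0 hztball
    rw [hG_def] at hschwarz
    simp only [hwzt] at hschwarz
    rw [hzt_def, norm_div, norm_div] at hschwarz
    have hfpos : 0 < (f t).re := by
      apply hpos; simp [ht]
    have hdne2 : f t + (starRingEnd ℂ) a ≠ 0 := by
      apply hden; simp [ht]
    rw [div_le_div_iff₀ (norm_pos_iff.mpr hdne2)
      (norm_pos_iff.mpr hd1)] at hschwarz
    have e1 := Complex.sq_norm (f t - a)
    have e2 := Complex.sq_norm ((t:ℂ) + (starRingEnd ℂ) s₀)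
    have e3 := Complex.sq_norm ((t:ℂ) - s₀)
    have e4 := Complex.sq_norm (f t + (starRingEnd ℂ) a)
    nlinarith [hschwarz, norm_nonneg (f t - a),
      norm_nonneg ((t:ℂ) + (starRingEnd ℂ) s₀),
      norm_nonneg ((t:ℂ) - s₀), norm_nonneg (f t + (starRingEnd ℂ) a),
      mul_nonneg (norm_nonneg (f t - a))
        (norm_nonneg ((t:ℂ) + (starRingEnd ℂ) s₀)),
      mul_nonneg (norm_nonneg ((t:ℂ) - s₀))
        (norm_nonneg (f t + (starRingEnd ℂ) a))]
  -- extract the coefficient inequality by letting t → ∞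
  set u : ℝ → ℂ := fun t => f t - (t : ℂ) * (q' : ℂ) with hu_def
  have hp : Tendsto (fun t => (u t).re) atTop (𝓝 c.re) :=
    (Complex.continuous_re.tendsto c).comp hlim
  have hv : Tendsto (fun t => (u t).im) atTop (𝓝 c.im) :=
    (Complex.continuous_im.tendsto c).comp hlim
  have hfre : ∀ t : ℝ, (f (t : ℂ)).re = t * q' + (u t).re := by
    intro t
    simp only [hu_def, Complex.sub_re, ← Complex.ofReal_mul, Complex.ofReal_re]
    ring
  have hfim : ∀ t : ℝ, (f (t : ℂ)).im = (u t).im := by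
    intro t
    simp only [hu_def, Complex.sub_im, ← Complex.ofReal_mul, Complex.ofReal_im]
    ring
  set g : ℝ → ℝ := fun t =>
    4 * a.re * (q' + (u t).re / t) * (1 + (s₀.re ^ 2 + s₀.im ^ 2) / t ^ 2)
      - 4 * s₀.re * ((q' + (u t).re / t) ^ 2
        + (a.re ^ 2 + ((u t).im - a.im) ^ 2) / t ^ 2) with hg_def
  have hid : ∀ t : ℝ, 0 < t → g t * t ^ 3
      = Complex.normSq ((t : ℂ) - s₀) * Complex.normSq (f t + (starRingEnd ℂ) a)
        - Complex.normSq (f t - a) * Complex.normSq ((t : ℂ) + (starRingEnd ℂ) s₀) := by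
    intro t ht
    have h1 := hfre t
    have h2 := hfim t
    simp only [hg_def, Complex.normSq_apply, Complex.sub_re, Complex.sub_im, Complex.add_re,
      Complex.add_im, Complex.conj_re, Complex.conj_im, Complex.ofReal_re, Complex.ofReal_im,
      h1, h2]
    field_simp
    ring
  have hg0 : ∀ᶠ t in atTop, 0 ≤ g t := by
    filter_upwards [eventually_gt_atTop (0:ℝ)] with t ht
    have hk := hkey t ht
    have h3 := hid t ht
    nlinarith [pow_pos ht 3]
  have h4 : Tendsto (fun t => (u t).re / t) atTop (𝓝 0) := hp.div_atTop tendsto_id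
  have h5 : Tendsto (fun t : ℝ => (s₀.re ^ 2 + s₀.im ^ 2) / t ^ 2) atTop (𝓝 0) :=
    tendsto_const_nhds.div_atTop (tendsto_pow_atTop two_ne_zero)
  have h6 : Tendsto (fun t => (a.re ^ 2 + ((u t).im - a.im) ^ 2) / t ^ 2) atTop (𝓝 0) := by
    exact (tendsto_const_nhds.add ((hv.sub_const a.im).pow 2)).div_atTop
      (tendsto_pow_atTop two_ne_zero)
  have hglim : Tendsto g atTop
      (𝓝 (4 * a.re * (q' + 0) * (1 + 0) - 4 * s₀.re * ((q' + 0) ^ 2 + 0))) := by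
    apply Tendsto.sub
    · exact ((tendsto_const_nhds.add h4).const_mul _).mul (tendsto_const_nhds.add h5)
    · exact (((tendsto_const_nhds.add h4).pow 2).add h6).const_mul _
  have hfin : (0:ℝ) ≤ 4 * a.re * (q' + 0) * (1 + 0) - 4 * s₀.re * ((q' + 0) ^ 2 + 0) :=
    ge_of_tendsto hglim hg0
  nlinarith [hq']

end LPHelpers

/-- The linear polynomial part of a positive real transfer function is
symmetric positive semidefinite, and the proper part is again positive real. -/
theorem linear_part_of_positive_real {n₁ m : ℕ}
    (A₁ : Matrix (Fin n₁) (Fin n₁) ℝ) (B₁ : Matrix (Fin n₁) (Fin m) ℝ)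
    (C₁ : Matrix (Fin m) (Fin n₁) ℝ) (D₀ M : Matrix (Fin m) (Fin m) ℝ)
    (hA : ∀ lam : ℂ, 0 < lam.re →
      (lam • (1 : Matrix (Fin n₁) (Fin n₁) ℂ) - toC A₁).det ≠ 0)
    (hpr : ∀ s : ℂ, 0 < s.re →
      ((toC C₁ * (s • (1 : Matrix (Fin n₁) (Fin n₁) ℂ) - toC A₁)⁻¹ * toC B₁
          + toC D₀ + s • toC M) +
        (toC C₁ * (s • (1 : Matrix (Fin n₁) (Fin n₁) ℂ) - toC A₁)⁻¹ * toC B₁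
          + toC D₀ + s • toC M)ᴴ).PosSemidef) :
    M = Mᵀ ∧ M.PosSemidef ∧
      ∀ s : ℂ, 0 < s.re →
        ((toC C₁ * (s • (1 : Matrix (Fin n₁) (Fin n₁) ℂ) - toC A₁)⁻¹ * toC B₁
            + toC D₀) +
          (toC C₁ * (s • (1 : Matrix (Fin n₁) (Fin n₁) ℂ) - toC A₁)⁻¹ * toC B₁
            + toC D₀)ᴴ).PosSemidef := by
  -- the scalar master inequality
  have MI : ∀ s : ℂ, 0 < s.re → ∀ x : Fin m → ℂ,
      0 ≤ (lpF A₁ B₁ C₁ D₀ x s).re + (s * lpQ M x).re := by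
    intro s hs x
    have h0 := (hpr s hs).dotProduct_mulVec_nonneg x
    have hZ : star x ⬝ᵥ ((toC C₁ * (s • (1 : Matrix (Fin n₁) (Fin n₁) ℂ) - toC A₁)⁻¹ * toC B₁
        + toC D₀ + s • toC M) *ᵥ x) = lpF A₁ B₁ C₁ D₀ x s + s * lpQ M x := by
      rw [Matrix.add_mulVec, dotProduct_add, lp_eq1, Matrix.smul_mulVec, dotProduct_smul,
        smul_eq_mul, lpQ]
    rw [Matrix.add_mulVec, dotProduct_add, lp_conj, hZ] at h0
    have h1 := (Complex.le_def.mp h0).1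
    simp only [Complex.add_re, Complex.zero_re, Complex.star_def, Complex.conj_re] at h1
    linarith
  -- the limit of lpF along curves going to infinity
  have LIM : ∀ (x : Fin m → ℂ) (g : ℝ → ℂ), Tendsto (fun t => ‖g t‖) atTop atTop →
      Tendsto (fun t => lpF A₁ B₁ C₁ D₀ x (g t)) atTop (𝓝 (star x ⬝ᵥ (toC D₀ *ᵥ x))) := by
    intro x g hg
    unfold lpF
    exact lp_tendsto_F (toC A₁) (star x ᵥ* toC C₁) (toC B₁ *ᵥ x) (star x ⬝ᵥ (toC D₀ *ᵥ x)) g hg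
  have hg_real : Tendsto (fun t : ℝ => ‖(t:ℂ)‖) atTop atTop := by
    have : (fun t : ℝ => ‖(t:ℂ)‖) = fun t : ℝ => |t| := by
      funext t; rw [Complex.norm_real, Real.norm_eq_abs]
    rw [this]
    exact tendsto_abs_atTop_atTop
  have hg_line : ∀ d : ℝ, d = 1 ∨ d = -1 →
      Tendsto (fun t : ℝ => ‖1 + (t:ℂ) * (d:ℂ) * Complex.I‖) atTop atTop := by
    intro d hd
    apply tendsto_atTop_mono _ tendsto_abs_atTop_atTop
    intro t
    have h1 := Complex.abs_im_le_norm (1 + (t:ℂ) * (d:ℂ) * Complex.I)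
    have h2 : (1 + (t:ℂ) * (d:ℂ) * Complex.I).im = t * d := by simp
    rw [h2] at h1
    have h3 : |t| = |t * d| := by rcases hd with rfl | rfl <;> simp [abs_mul]
    rw [h3]; exact h1
  -- K1 : the quadratic form of M is real
  have K1 : ∀ x : Fin m → ℂ, (lpQ M x).im = 0 := by
    intro x
    have haux : ∀ d : ℝ, d = 1 ∨ d = -1 → d * (lpQ M x).im ≤ 0 := by
      intro d hd
      have hlim : Tendsto (fun t : ℝ => (lpF A₁ B₁ C₁ D₀ x (1 + (t:ℂ) * (d:ℂ) * Complex.I)).re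
          + (lpQ M x).re) atTop (𝓝 ((star x ⬝ᵥ (toC D₀ *ᵥ x)).re + (lpQ M x).re)) := by
        exact ((Complex.continuous_re.tendsto _).comp (LIM x _ (hg_line d hd))).add_const _
      have hineq : ∀ᶠ t : ℝ in atTop, t * (d * (lpQ M x).im) ≤
          (lpF A₁ B₁ C₁ D₀ x (1 + (t:ℂ) * (d:ℂ) * Complex.I)).re + (lpQ M x).re := by
        filter_upwards with t
        have hs : (0:ℝ) < (1 + (t:ℂ) * (d:ℂ) * Complex.I).re := by simp
        have h3 := MI _ hs x
        have h4 : ((1 + (t:ℂ) * (d:ℂ) * Complex.I) * lpQ M x).re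
            = (lpQ M x).re - t * d * (lpQ M x).im := by
          simp only [Complex.add_re, Complex.add_im, Complex.mul_re, Complex.mul_im,
            Complex.one_re, Complex.one_im, Complex.ofReal_re, Complex.ofReal_im,
            Complex.I_re, Complex.I_im]
          ring
        rw [h4] at h3
        linarith [h3]
      exact lp_le_zero _ _ _ hineq hlim
    have h1 := haux 1 (Or.inl rfl)
    have h2 := haux (-1) (Or.inr rfl)
    simp at h1 h2
    linarith
  -- K2 : the quadratic form of M is nonnegative
  have K2 : ∀ x : Fin m → ℂ, 0 ≤ (lpQ M x).re := by
    intro x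
    have hlim : Tendsto (fun t : ℝ => (lpF A₁ B₁ C₁ D₀ x ((t:ℝ):ℂ)).re)
        atTop (𝓝 ((star x ⬝ᵥ (toC D₀ *ᵥ x)).re)) :=
      (Complex.continuous_re.tendsto _).comp (LIM x _ hg_real)
    have hineq : ∀ᶠ t : ℝ in atTop, t * (-(lpQ M x).re) ≤ (lpF A₁ B₁ C₁ D₀ x ((t:ℝ):ℂ)).re := by
      filter_upwards [eventually_gt_atTop (0:ℝ)] with t ht
      have hs : (0:ℝ) < ((t:ℂ)).re := by simpa using ht
      have h3 := MI _ hs x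
      have h4 : ((t:ℂ) * lpQ M x).re = t * (lpQ M x).re := by
        simp [Complex.mul_re]
      rw [h4] at h3
      linarith
    have := lp_le_zero _ _ _ hineq hlim
    linarith
  -- KEY : positivity of the proper part on the right half plane
  have KEY : ∀ (x : Fin m → ℂ) (s₀ : ℂ), 0 < s₀.re → 0 ≤ (lpF A₁ B₁ C₁ D₀ x s₀).re := by
    intro x s₀ hs₀
    have hqim := K1 x
    have hqre := K2 x
    suffices h : ∀ ε : ℝ, 0 < ε → -ε ≤ (lpF A₁ B₁ C₁ D₀ x s₀).re by
      by_contra hc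
      push_neg at hc
      have := h (-(lpF A₁ B₁ C₁ D₀ x s₀).re / 2) (by linarith)
      linarith
    intro ε hε
    set qr : ℝ := (lpQ M x).re with hqr_def
    set ψ : ℂ → ℂ := fun s => lpF A₁ B₁ C₁ D₀ x s + s * (qr:ℂ) + (ε:ℂ) * (1 + s) with hψ_def
    have hqc : lpQ M x = (qr:ℂ) := by
      apply Complex.ext <;> simp [hqr_def, hqim]
    have hψre : ∀ s : ℂ, (ψ s).re = (lpF A₁ B₁ C₁ D₀ x s).re + s.re * qr + ε * (1 + s.re) := by
      intro s
      simp only [hψ_def, Complex.add_re, Complex.add_im, Complex.mul_re, Complex.ofReal_re,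
        Complex.ofReal_im, Complex.one_re, Complex.one_im]
      ring
    have hdiff : ∀ s : ℂ, 0 < s.re → DifferentiableAt ℂ ψ s := by
      intro s hs
      have h1 : DifferentiableAt ℂ (fun s => lpF A₁ B₁ C₁ D₀ x s) s := by
        unfold lpF
        exact lp_diff_F (toC A₁) (star x ᵥ* toC C₁) (toC B₁ *ᵥ x) (star x ⬝ᵥ (toC D₀ *ᵥ x))
          (hA s hs)
      exact (h1.add (differentiableAt_fun_id.mul_const _)).add
        ((differentiableAt_const _).mul ((differentiableAt_const _).add differentiableAt_fun_id))
    have hpos : ∀ s : ℂ, 0 < s.re → 0 < (ψ s).re := by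
      intro s hs
      have h3 := MI s hs x
      rw [hqc] at h3
      have h4 : (s * (qr:ℂ)).re = s.re * qr := by
        simp [Complex.mul_re]
      rw [h4] at h3
      rw [hψre s]
      nlinarith
    have hq' : (0:ℝ) < qr + ε := by linarith
    have hlim : Tendsto (fun t : ℝ => ψ t - (t:ℂ) * ((qr + ε : ℝ):ℂ)) atTop
        (𝓝 ((star x ⬝ᵥ (toC D₀ *ᵥ x)) + (ε:ℂ))) := by
      have hfun : (fun t : ℝ => ψ t - (t:ℂ) * ((qr + ε : ℝ):ℂ))
          = fun t : ℝ => lpF A₁ B₁ C₁ D₀ x ((t:ℝ):ℂ) + (ε:ℂ) := by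
        funext t
        simp only [hψ_def]
        push_cast
        ring
      rw [hfun]
      exact (LIM x _ hg_real).add_const _
    have hjul := lp_julia ψ (qr + ε) _ hdiff hpos hq' hlim s₀ hs₀
    rw [hψre s₀] at hjul
    nlinarith
  -- assemble the three statements
  have hsym : M = Mᵀ := by
    ext i j
    rw [Matrix.transpose_apply]
    have := K1 ((Pi.single i 1 : Fin m → ℂ) + Complex.I • (Pi.single j 1 : Fin m → ℂ))
    rw [lp_qsingle] at this
    linarith
  refine ⟨hsym, Matrix.PosSemidef.of_dotProduct_mulVec_nonneg ?_ ?_, ?_⟩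
  · -- M is Hermitian (symmetric)
    show Mᴴ = M
    ext i j
    rw [Matrix.conjTranspose_apply]
    conv_rhs => rw [hsym]
    simp [Matrix.transpose_apply]
  · -- the real quadratic form is nonnegative
    intro x
    have h1 := K2 (fun i => ((x i : ℝ) : ℂ))
    have h2 : lpQ M (fun i => ((x i : ℝ) : ℂ)) = ((x ⬝ᵥ (M *ᵥ x) : ℝ) : ℂ) := by
      rw [lpQ]
      simp only [dotProduct, Matrix.mulVec, dotProduct, toC, Matrix.map_apply, Pi.star_apply,
        Complex.star_def, Complex.conj_ofReal]
      push_cast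
      ring
    rw [h2] at h1
    simpa using h1
  · -- positivity of the proper part
    intro s hs
    apply Matrix.PosSemidef.of_dotProduct_mulVec_nonneg
    · exact Matrix.isHermitian_add_transpose_self _
    · intro x
      rw [Matrix.add_mulVec, dotProduct_add, lp_conj, lp_eq1]
      rw [Complex.le_def]
      constructor
      · simp only [Complex.add_re, Complex.zero_re, Complex.star_def, Complex.conj_re]
        have := KEY x s hs
        linarith
      · simp [Complex.add_im]
end

section
/- A positive real system that is not port-Hamiltonian: the descriptor system with E = [[1,0],[0,0]], A = [[−1,0],[0,−1]], B = [1;1], C = [1,1], D = −1 (n = 2, m = 1) is positive real (indeed det(sE−A) = s+1 ≠ 0 and T(s) + conj(T(s)) = 2·Re(1/(s+1)) ≥ 0 for Re(s) > 0), but it is not port-Hamiltonian. -/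
open Matrix
open scoped ComplexOrder

/-- The descriptor system `E = [[1,0],[0,0]]`, `A = -I₂`, `B = [1;1]`,
`C = [1,1]`, `D = -1` is positive real but not port-Hamiltonian. -/
theorem example_positive_real_not_pH :
    PositiveReal (!![1, 0; 0, 0] : Matrix (Fin 2) (Fin 2) ℝ) !![-1, 0; 0, -1]
      !![(1 : ℝ); 1] !![(1 : ℝ), 1] !![(-1 : ℝ)] ∧
    ¬ IsPortHamiltonian (!![1, 0; 0, 0] : Matrix (Fin 2) (Fin 2) ℝ) !![-1, 0; 0, -1]
      !![(1 : ℝ); 1] !![(1 : ℝ), 1] !![(-1 : ℝ)] := by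
  constructor
  · intro s hs
    have hs1 : s + 1 ≠ 0 := by
      intro h
      have : (s + 1).re = 0 := by rw [h]; simp
      simp [Complex.add_re] at this
      linarith
    have hpen : pencil (!![1, 0; 0, 0] : Matrix (Fin 2) (Fin 2) ℝ) !![-1, 0; 0, -1] s
        = !![s + 1, 0; 0, 1] := by
      ext i j
      fin_cases i <;> fin_cases j <;>
        simp [pencil, toC, Matrix.map_apply, Matrix.sub_apply, Matrix.smul_apply]
    have hinv : (!![s + 1, (0:ℂ); 0, 1])⁻¹ = !![(s + 1)⁻¹, 0; 0, 1] := by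
      apply inv_eq_left_inv
      ext i j
      fin_cases i <;> fin_cases j <;>
        simp [Matrix.mul_apply, Fin.sum_univ_two, inv_mul_cancel₀ hs1]
    have htr : transfer (!![1, 0; 0, 0] : Matrix (Fin 2) (Fin 2) ℝ) !![-1, 0; 0, -1]
        !![(1 : ℝ); 1] !![(1 : ℝ), 1] !![(-1 : ℝ)] s = !![(s + 1)⁻¹] := by
      rw [transfer, hpen, hinv]
      ext i j
      fin_cases i <;> fin_cases j <;>
        simp [toC, Matrix.mul_apply, Fin.sum_univ_two, Matrix.map_apply]
    refine ⟨?_, ?_⟩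
    · rw [hpen, Matrix.det_fin_two_of]
      simpa using hs1
    · rw [htr]
      have hherm : (!![(s + 1)⁻¹] + (!![(s + 1)⁻¹] : Matrix (Fin 1) (Fin 1) ℂ)ᴴ).IsHermitian := by
        ext i j
        fin_cases i <;> fin_cases j <;>
          simp [Matrix.conjTranspose_apply, Matrix.add_apply, add_comm]
      refine Matrix.PosSemidef.of_dotProduct_mulVec_nonneg hherm ?_
      intro x
      simp only [dotProduct, Matrix.mulVec, Fin.sum_univ_one,
        Matrix.conjTranspose_apply, Matrix.add_apply, Matrix.of_apply, Matrix.cons_val',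
        Matrix.cons_val_zero, Matrix.empty_val', Matrix.cons_val_fin_one, Pi.star_apply,
        RCLike.star_def]
      have key : (starRingEnd ℂ) (x 0) * (((s + 1)⁻¹ + (starRingEnd ℂ) ((s + 1)⁻¹)) * x 0)
          = ((2 * ((s + 1)⁻¹).re * Complex.normSq (x 0) : ℝ) : ℂ) := by
        rw [Complex.add_conj]
        rw [show (starRingEnd ℂ) (x 0) * (((2 * ((s + 1)⁻¹).re : ℝ) : ℂ) * x 0)
            = ((2 * ((s + 1)⁻¹).re : ℝ) : ℂ) * ((starRingEnd ℂ) (x 0) * x 0) by ring]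
        rw [← Complex.normSq_eq_conj_mul_self, ← Complex.ofReal_mul]
      rw [key, Complex.zero_le_real]
      have h1 : 0 < (s + 1).re := by simp [Complex.add_re]; linarith
      have hre : 0 ≤ ((s + 1)⁻¹).re := by
        rw [Complex.inv_re]
        exact div_nonneg h1.le (Complex.normSq_nonneg _)
      have := Complex.normSq_nonneg (x 0)
      nlinarith
  · rintro ⟨J, R, Q, G, P, hA, hB, hC, hJ, hEQ, hblock⟩
    have h := hblock.dotProduct_mulVec_nonneg (Pi.single (Sum.inr 0) 1)
    simp only [dotProduct, Matrix.mulVec, Fintype.sum_sum_type, Fin.sum_univ_two,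
      Fin.sum_univ_one, Pi.single_apply, Pi.star_apply, star_trivial,
      Matrix.fromBlocks_apply₁₁, Matrix.fromBlocks_apply₁₂, Matrix.fromBlocks_apply₂₁,
      Matrix.fromBlocks_apply₂₂, Matrix.smul_apply, Matrix.add_apply,
      Matrix.transpose_apply] at h
    simp [Sum.inl_ne_inr] at h
    norm_num at h
end

section
/- Transfer function invariance under output shifting: let E, A ∈ ℝ^{n×n}, B ∈ ℝ^{n×m}, C ∈ ℝ^{m×n}, D ∈ ℝ^{m×m}, and W ∈ ℝ^{n×m} with E^T W = 0. Then for every s ∈ ℂ such that sE − A is invertible (matrices viewed as complex), (C − W^T A)(sE − A)^{-1}B + (D − W^T B) = C(sE − A)^{-1}B + D. -/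
open Matrix
open scoped ComplexOrder

/-- Transfer function invariance under output shifting with `EᵀW = 0`. -/
theorem transfer_invariance_output_shift {n m : ℕ}
    (E A : Matrix (Fin n) (Fin n) ℝ) (B : Matrix (Fin n) (Fin m) ℝ)
    (C : Matrix (Fin m) (Fin n) ℝ) (D : Matrix (Fin m) (Fin m) ℝ)
    (W : Matrix (Fin n) (Fin m) ℝ) (hW : Eᵀ * W = 0) :
    ∀ s : ℂ, IsUnit (s • toC E - toC A) →
      toC (C - Wᵀ * A) * (s • toC E - toC A)⁻¹ * toC B + toC (D - Wᵀ * B)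
        = toC C * (s • toC E - toC A)⁻¹ * toC B + toC D := by
  intro s hs
  have hmul : ∀ {k l p : Type} [Fintype l] (M : Matrix k l ℝ) (N : Matrix l p ℝ),
      toC (M * N) = toC M * toC N := by
    intro k l p _ M N
    ext i j
    simp [toC, Matrix.mul_apply]
  have ht : ∀ {k l : Type} (M : Matrix k l ℝ), toC (Mᵀ) = (toC M)ᵀ := by
    intro k l M; ext i j; simp [toC]
  have hsub : ∀ {k l : Type} (M N : Matrix k l ℝ), toC (M - N) = toC M - toC N := by
    intro k l M N; ext i j; simp [toC]
  have hWE : Wᵀ * E = 0 := by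
    have := congrArg Matrix.transpose hW
    simpa [Matrix.transpose_mul] using this
  have hWEC : toC (Wᵀ) * toC E = 0 := by
    have h := congrArg toC hWE
    rw [hmul] at h
    simpa [toC] using h
  have key : toC (Wᵀ) * toC A * (s • toC E - toC A)⁻¹ = -(toC (Wᵀ)) := by
    have h1 : toC (Wᵀ) * toC A = -(toC (Wᵀ) * (s • toC E - toC A)) := by
      rw [Matrix.mul_sub, Matrix.mul_smul, hWEC]
      simp
    rw [h1, Matrix.neg_mul, Matrix.mul_assoc,
      Matrix.mul_nonsing_inv _ ((Matrix.isUnit_iff_isUnit_det _).mp hs), Matrix.mul_one]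
  rw [hsub, hsub, hmul, hmul]
  rw [Matrix.sub_mul, Matrix.sub_mul, Matrix.mul_assoc (toC Wᵀ), ← Matrix.mul_assoc (toC Wᵀ), key]
  rw [Matrix.neg_mul]
  abel
end

section
/- Worked 3×3 example of a port-Hamiltonian realization: let E = diag(1,0,0), A = [[−1,−1,0],[−1,0,0],[0,0,−1]], B = [[1,1],[−1,0],[0,1]] (n = 3, m = 2). Then the quintuple (E, A, B, C', D') with C' = [[3,1,−1],[0,0,−1]] and D' = I₂ is port-Hamiltonian, and for every s ∈ ℂ with det(sE−A) ≠ 0 it has the same transfer function as the quintuple (E, A, B, C, D) with C = [[1,1,−1],[0,0,1]] and D = −I₂, i.e. C'(sE−A)^{-1}B + D' = C(sE−A)^{-1}B + D. -/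
open Matrix
open scoped ComplexOrder

section AuxPH

private lemma pencil_eq_3x3 (s : ℂ) :
    pencil (!![1, 0, 0; 0, 0, 0; 0, 0, 0] : Matrix (Fin 3) (Fin 3) ℝ)
      !![-1, -1, 0; -1, 0, 0; 0, 0, -1] s = !![s + 1, 1, 0; 1, 0, 0; 0, 0, 1] := by
  ext i j
  fin_cases i <;> fin_cases j <;>
    simp [pencil, toC, Matrix.vecHead, Matrix.vecTail]

private lemma pencil_inv_3x3 (s : ℂ) :
    (pencil (!![1, 0, 0; 0, 0, 0; 0, 0, 0] : Matrix (Fin 3) (Fin 3) ℝ)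
      !![-1, -1, 0; -1, 0, 0; 0, 0, -1] s)⁻¹ = !![0, 1, 0; 1, -(s+1), 0; 0, 0, 1] := by
  apply Matrix.inv_eq_right_inv
  rw [pencil_eq_3x3, Matrix.mul_fin_three]
  ext i j
  fin_cases i <;> fin_cases j <;>
    simp [Matrix.one_apply, Matrix.vecHead, Matrix.vecTail] <;> ring

private lemma psd_of_eq_conjTranspose_mul_self {ι : Type*} [Fintype ι] {A : Matrix ι ι ℝ} :
    (∃ B : Matrix ι ι ℝ, A = Bᴴ * B) → A.PosSemidef := by
  rintro ⟨B, rfl⟩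
  exact Matrix.posSemidef_conjTranspose_mul_self B

end AuxPH

/-- Worked 3×3 example: `(E, A, B, C', I₂)` with `C' = [[3,1,-1],[0,0,-1]]`
is a port-Hamiltonian realization of `(E, A, B, C, -I₂)` with `C = [[1,1,-1],[0,0,1]]`. -/
theorem example_pH_realization_3x3 :
    IsPortHamiltonian (!![1, 0, 0; 0, 0, 0; 0, 0, 0] : Matrix (Fin 3) (Fin 3) ℝ)
      !![-1, -1, 0; -1, 0, 0; 0, 0, -1] !![(1 : ℝ), 1; -1, 0; 0, 1]
      !![(3 : ℝ), 1, -1; 0, 0, -1] !![(1 : ℝ), 0; 0, 1] ∧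
    ∀ s : ℂ,
      (pencil (!![1, 0, 0; 0, 0, 0; 0, 0, 0] : Matrix (Fin 3) (Fin 3) ℝ)
        !![-1, -1, 0; -1, 0, 0; 0, 0, -1] s).det ≠ 0 →
      toC !![(3 : ℝ), 1, -1; 0, 0, -1] *
          (pencil (!![1, 0, 0; 0, 0, 0; 0, 0, 0] : Matrix (Fin 3) (Fin 3) ℝ)
            !![-1, -1, 0; -1, 0, 0; 0, 0, -1] s)⁻¹ *
          toC !![(1 : ℝ), 1; -1, 0; 0, 1] + toC !![(1 : ℝ), 0; 0, 1]
        = toC !![(1 : ℝ), 1, -1; 0, 0, 1] *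
          (pencil (!![1, 0, 0; 0, 0, 0; 0, 0, 0] : Matrix (Fin 3) (Fin 3) ℝ)
            !![-1, -1, 0; -1, 0, 0; 0, 0, -1] s)⁻¹ *
          toC !![(1 : ℝ), 1; -1, 0; 0, 1] + toC !![(-1 : ℝ), 0; 0, -1] := by
  constructor
  · refine ⟨!![0, 1, 0; -1, 0, 0; 0, 0, 0], !![2, 0, 1; 0, 0, 0; 1, 0, 1],
      !![1, 0, 0; 0, -1, 1; -1, 0, 1], !![2, 0; -1, 0; 0, 0], !![1, -1; 0, 0; 0, -1],
      ?_, ?_, ?_, ?_, ?_, ?_⟩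
    · ext i j
      fin_cases i <;> fin_cases j <;>
        norm_num [Matrix.mul_apply, Fin.sum_univ_succ, Matrix.vecHead, Matrix.vecTail, Matrix.cons_val, Matrix.cons_val_two]
    · ext i j
      fin_cases i <;> fin_cases j <;>
        norm_num [Matrix.vecHead, Matrix.vecTail]
    · ext i j
      fin_cases i <;> fin_cases j <;>
        norm_num [Matrix.mul_apply, Fin.sum_univ_succ, Matrix.vecHead, Matrix.vecTail, Matrix.cons_val, Matrix.cons_val_two]
    · ext i j
      fin_cases i <;> fin_cases j <;>
        simp [Matrix.vecHead, Matrix.vecTail]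
    · apply psd_of_eq_conjTranspose_mul_self
      refine ⟨!![1, 0, 0; 0, 0, 0; 0, 0, 0], ?_⟩
      ext i j
      fin_cases i <;> fin_cases j <;>
        simp [Matrix.mul_apply, Fin.sum_univ_succ, Matrix.vecHead, Matrix.vecTail]
    · apply psd_of_eq_conjTranspose_mul_self
      refine ⟨Matrix.fromBlocks !![1, 0, 0; 0, 0, 0; 0, 0, 1] !![1, 0; 0, 0; 0, -1] 0 0, ?_⟩
      rw [Matrix.fromBlocks_conjTranspose, Matrix.fromBlocks_multiply,
        Matrix.fromBlocks_inj]
      refine ⟨?_, ?_, ?_, ?_⟩ <;>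
        · ext i j
          fin_cases i <;> fin_cases j <;>
            norm_num [Matrix.mul_apply, Fin.sum_univ_succ, Matrix.vecHead, Matrix.vecTail]
  · intro s _
    rw [pencil_inv_3x3]
    ext i j
    fin_cases i <;> fin_cases j <;>
      simp [toC, Matrix.mul_apply, Fin.sum_univ_succ, Matrix.vecHead, Matrix.vecTail] <;> ring
end
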